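/- arXiv:math-ph/9908024 — 4 statements merged into one kernel-verified Lean document; each statement's English description precedes it below -/
import Mathlib

section
/- For 0 < |v| < 1, the field energy of the charge soliton satisfies (1/2)∫ d³k |ρ̂(k)|² [k² - (k·v)²]⁻² ((1+v²)k² - (3-v²)(v·k)²) = m_e [ (1/|v|) log((1+|v|)/(1-|v|)) - 1 ], where m_e = (1/2)∫ d³k |ρ̂(k)|²/k². -/
open MeasureTheory Real Set Metric intervalIntegral
open scoped ENNReal RealInnerProductSpace

section Helpers
open MeasureTheory Real Set Metric intervalIntegral
open scoped ENNReal

noncomputable def Φequiv : (ℝ × EuclideanSpace ℝ (Fin 2)) ≃ᵐ EuclideanSpace ℝ (Fin 3) :=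
  ((MeasurableEquiv.refl ℝ).prodCongr ((MeasurableEquiv.toLp 2 (Fin 2 → ℝ)).symm)).trans
    ((MeasurableEquiv.piFinSuccAbove (fun _ : Fin 3 => ℝ) 0).symm.trans
      (MeasurableEquiv.toLp 2 (Fin 3 → ℝ)))

lemma Φequiv_mp : MeasurePreserving Φequiv volume volume := by
  have h1 : MeasurePreserving
      (Prod.map (id : ℝ → ℝ) ((MeasurableEquiv.toLp 2 (Fin 2 → ℝ)).symm)) volume volume :=
    (MeasurePreserving.id _).prod (EuclideanSpace.volume_preserving_symm_measurableEquiv_toLp (Fin 2))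
  have h2 := (MeasureTheory.volume_preserving_piFinSuccAbove (fun _ : Fin 3 => ℝ) 0).symm
  have h3 := (EuclideanSpace.volume_preserving_symm_measurableEquiv_toLp (Fin 3)).symm
  exact (h3.comp h2).comp h1

lemma Φequiv_fst (p : ℝ × EuclideanSpace ℝ (Fin 2)) : (Φequiv p) 0 = p.1 := by
  simp [Φequiv, MeasurableEquiv.piFinSuccAbove, MeasurableEquiv.prodCongr, Equiv.prodCongr_apply,
    Prod.map, MeasurableEquiv.coe_toLp_symm, MeasurableEquiv.coe_toLp]

lemma Φequiv_norm (p : ℝ × EuclideanSpace ℝ (Fin 2)) : ‖Φequiv p‖^2 = p.1^2 + ‖p.2‖^2 := by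
  rw [EuclideanSpace.norm_eq, EuclideanSpace.norm_eq, Real.sq_sqrt (by positivity),
    Real.sq_sqrt (by positivity)]
  simp [Φequiv, MeasurableEquiv.piFinSuccAbove, Fin.sum_univ_succ, MeasurableEquiv.prodCongr,
    Equiv.prodCongr_apply, Prod.map, MeasurableEquiv.coe_toLp_symm,
    MeasurableEquiv.coe_toLp]

lemma coord_abs_le_norm (k : EuclideanSpace ℝ (Fin 3)) (i : Fin 3) : |k i| ≤ ‖k‖ := by
  have h := abs_real_inner_le_norm (EuclideanSpace.single i (1:ℝ)) k
  rw [EuclideanSpace.inner_single_left, EuclideanSpace.norm_single] at h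
  simpa using h

lemma coord_div_norm_mem (k : EuclideanSpace ℝ (Fin 3)) : |k 0 / ‖k‖| ≤ 1 := by
  rcases eq_or_ne k 0 with rfl | hk
  · simp
  · rw [abs_div, abs_norm, div_le_one (norm_pos_iff.mpr hk)]
    exact coord_abs_le_norm k 0

lemma measurable_inner_fn {h : ℝ → ℝ} (hc : Continuous h) :
    Measurable fun k : EuclideanSpace ℝ (Fin 3) => h (k 0 / ‖k‖) := by
  have h1 : Measurable fun k : EuclideanSpace ℝ (Fin 3) => k 0 := by
    exact (measurable_pi_apply 0).comp (MeasurableEquiv.toLp 2 (Fin 3 → ℝ)).symm.measurable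
  have h2 : Measurable fun k : EuclideanSpace ℝ (Fin 3) => ‖k‖ := measurable_norm
  exact hc.measurable.comp (h1.div h2)
lemma pipe_lemma {h : ℝ → ℝ} (hc : Continuous h) :
    ∫ k : EuclideanSpace ℝ (Fin 3),
        Set.indicator (Metric.ball 0 1) (fun k => h (k 0 / ‖k‖)) k
      = (2/3 * (volume (Metric.ball (0 : EuclideanSpace ℝ (Fin 2)) 1)).toReal)
        * ∫ u in (-1:ℝ)..1, h u := by
  obtain ⟨C, hC⟩ := (isCompact_Icc : IsCompact (Set.Icc (-1:ℝ) 1)).exists_bound_of_continuousOn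
    hc.continuousOn
  set c₂ := (volume (Metric.ball (0 : EuclideanSpace ℝ (Fin 2)) 1)).toReal with hc₂
  set F : EuclideanSpace ℝ (Fin 3) → ℝ :=
    Set.indicator (Metric.ball 0 1) (fun k => h (k 0 / ‖k‖)) with hF
  -- integrability of F
  have hFmeas : Measurable F :=
    (measurable_inner_fn hc).indicator measurableSet_ball
  have hFint : Integrable F := by
    refine (MeasureTheory.Measure.integrableOn_of_bounded (M := C)
      measure_ball_lt_top.ne ((measurable_inner_fn hc).aestronglyMeasurable) ?_).integrable_indicator
      measurableSet_ball
    filter_upwards with k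
    exact hC _ (by simpa using abs_le.mp (coord_div_norm_mem k))
  -- the 1-d integrand after all reductions
  set I := ∫ u in (-1:ℝ)..1, h u with hI
  set g₂ : ℝ → ℝ → ℝ := fun t r =>
    Set.indicator {x : ℝ | t^2 + x^2 < 1} (fun x => h (t / Real.sqrt (t^2 + x^2))) r with hg₂
  have step1 : ∫ k, F k = ∫ p : ℝ × EuclideanSpace ℝ (Fin 2), F (Φequiv p) :=
    (Φequiv_mp.integral_comp Φequiv.measurableEmbedding F).symm
  have hFcomp : ∀ p : ℝ × EuclideanSpace ℝ (Fin 2), F (Φequiv p) = g₂ p.1 ‖p.2‖ := by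
    intro p
    rw [hF, hg₂]
    dsimp only
    have hnorm : ‖Φequiv p‖ = Real.sqrt (p.1^2 + ‖p.2‖^2) := by
      rw [← Φequiv_norm p, Real.sqrt_sq (norm_nonneg _)]
    have hmem : ‖Φequiv p‖ < 1 ↔ p.1^2 + ‖p.2‖^2 < 1 := by
      rw [← Φequiv_norm p]
      exact (pow_lt_one_iff_of_nonneg (norm_nonneg _) two_ne_zero).symm
    by_cases hb : p.1^2 + ‖p.2‖^2 < 1
    · rw [Set.indicator_of_mem (mem_ball_zero_iff.mpr (hmem.mpr hb)),
        Set.indicator_of_mem (by exact hb)]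
      rw [Φequiv_fst, hnorm]
    · rw [Set.indicator_of_notMem (fun hmm => hb (hmem.mp (mem_ball_zero_iff.mp hmm))),
        Set.indicator_of_notMem (by exact hb)]
  have step2 : ∫ p : ℝ × EuclideanSpace ℝ (Fin 2), F (Φequiv p)
      = ∫ t : ℝ, ∫ y : EuclideanSpace ℝ (Fin 2), g₂ t ‖y‖ := by
    have hint : Integrable (F ∘ Φequiv) (volume : Measure (ℝ × EuclideanSpace ℝ (Fin 2))) :=
      (Φequiv_mp.integrable_comp_emb Φequiv.measurableEmbedding).mpr hFint
    rw [show (fun p : ℝ × EuclideanSpace ℝ (Fin 2) => F (Φequiv p)) = F ∘ Φequiv from rfl]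
    rw [MeasureTheory.Measure.volume_eq_prod] at hint ⊢
    rw [MeasureTheory.integral_prod _ hint]
    exact integral_congr_ae (Filter.Eventually.of_forall fun t =>
      integral_congr_ae (Filter.Eventually.of_forall fun y => hFcomp (t, y)))
  have step3 : ∀ t : ℝ, (∫ y : EuclideanSpace ℝ (Fin 2), g₂ t ‖y‖)
      = 2 * (c₂ * ∫ r in Set.Ioi (0:ℝ), r * g₂ t r) := by
    intro t
    rw [integral_fun_norm_addHaar (volume : Measure (EuclideanSpace ℝ (Fin 2))) (g₂ t)]
    simp only [finrank_euclideanSpace_fin, smul_eq_mul, nsmul_eq_mul, Nat.cast_ofNat, pow_one]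
    norm_num
    exact Or.inl rfl
  set F₂ : ℝ × ℝ → ℝ := fun q =>
    Set.indicator {q : ℝ × ℝ | |q.1| < q.2 ∧ q.2 < 1} (fun q => q.2 * h (q.1/q.2)) q with hF₂
  have hC0 : 0 ≤ C := le_trans (norm_nonneg _) (hC 0 (by norm_num))
  -- step 4 : radial substitution, for a.e. t
  have step4 : ∀ᵐ t : ℝ, (∫ r in Set.Ioi (0:ℝ), r * g₂ t r) = ∫ ρ : ℝ, F₂ (t, ρ) := by
    have hae : ∀ᵐ t : ℝ, t ∉ ({0, 1, -1} : Set ℝ) :=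
      (((Set.finite_singleton (-1:ℝ)).insert 1 |>.insert 0).countable).ae_notMem _
    filter_upwards [hae] with t htmem
    simp only [Set.mem_insert_iff, Set.mem_singleton_iff, not_or] at htmem
    obtain ⟨ht0, ht1, ht1'⟩ := htmem
    have habs : |t| ≠ 1 := by
      intro hx; rcases abs_eq (by norm_num : (0:ℝ) ≤ 1) |>.mp hx with h' | h' <;> tauto
    have hRHS : (fun ρ => F₂ (t, ρ))
        = Set.indicator (Set.Ioo |t| 1) (fun ρ => ρ * h (t/ρ)) := by
      funext ρ
      rw [hF₂]
      dsimp only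
      rw [Set.indicator_apply, Set.indicator_apply]
      exact if_congr (by simp [Set.mem_setOf_eq, Set.mem_Ioo]) rfl rfl
    by_cases htlt : |t| < 1
    · -- main case
      have ht2 : (0:ℝ) < 1 - t^2 := by nlinarith [abs_nonneg t, sq_abs t]
      set c := Real.sqrt (1 - t^2) with hcdef
      have hc0 : 0 < c := Real.sqrt_pos.mpr ht2
      have htsq : ∀ x : ℝ, 0 < t^2 + x^2 := fun x => by positivity
      have hs0 : ∀ x : ℝ, 0 < Real.sqrt (t^2+x^2) := fun x => Real.sqrt_pos.mpr (htsq x)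
      -- remove the indicator
      have e1 : (fun r => r * g₂ t r)
          = Set.indicator {x : ℝ | t^2 + x^2 < 1} (fun r => r * h (t/Real.sqrt (t^2+r^2))) := by
        funext r
        rw [hg₂]
        dsimp only
        rw [Set.indicator_apply, Set.indicator_apply]
        split
        · rfl
        · exact mul_zero r
      have hSmeas : MeasurableSet {x : ℝ | t^2 + x^2 < 1} :=
        (isOpen_lt (by fun_prop) continuous_const).measurableSet
      have e2 : Set.Ioi (0:ℝ) ∩ {x : ℝ | t^2 + x^2 < 1} = Set.Ioo 0 c := by
        ext x
        simp only [Set.mem_inter_iff, Set.mem_Ioi, Set.mem_setOf_eq, Set.mem_Ioo]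
        constructor
        · rintro ⟨hx, hx2⟩
          exact ⟨hx, (Real.lt_sqrt hx.le).mpr (by nlinarith)⟩
        · rintro ⟨hx, hx2⟩
          have := (Real.lt_sqrt hx.le).mp hx2
          exact ⟨hx, by nlinarith⟩
      -- substitution
      have hsub : (∫ y in (0:ℝ)..c, (y / Real.sqrt (t^2+y^2))
            • ((fun ρ => ρ * h (t/ρ)) ∘ (fun y => Real.sqrt (t^2+y^2))) y)
          = ∫ ρ in Real.sqrt (t^2+0^2)..Real.sqrt (t^2+c^2), ρ * h (t/ρ) := by
        apply intervalIntegral.integral_comp_smul_deriv''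
        · fun_prop
        · intro x hx
          have hd : HasDerivAt (fun y : ℝ => t^2+y^2) (2*x) x := by
            simpa using (hasDerivAt_pow 2 x).const_add (t^2)
          have hder := (Real.hasDerivAt_sqrt (htsq x).ne').comp x hd
          have : (1 / (2 * Real.sqrt (t^2+x^2))) * (2*x) = x / Real.sqrt (t^2+x^2) := by
            field_simp
          rw [this] at hder
          exact hder.hasDerivWithinAt
        · exact ContinuousOn.div continuous_id.continuousOn
            (by fun_prop) (fun x _ => (hs0 x).ne')
        · have himg : (fun y => Real.sqrt (t^2+y^2)) '' (Set.uIcc 0 c)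
              ⊆ {ρ : ℝ | |t| ≤ ρ} := by
            rintro _ ⟨y, -, rfl⟩
            simp only [Set.mem_setOf_eq]
            calc |t| = Real.sqrt (t^2) := (Real.sqrt_sq_eq_abs t).symm
              _ ≤ _ := Real.sqrt_le_sqrt (by nlinarith [sq_nonneg y])
          refine ContinuousOn.mono ?_ himg
          refine continuousOn_id.mul (hc.comp_continuousOn
            (continuousOn_const.div continuousOn_id (fun ρ hρ => ?_)))
          exact ne_of_gt (lt_of_lt_of_le (abs_pos.mpr ht0) hρ)
      have hf0 : Real.sqrt (t^2+0^2) = |t| := by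
        simp [Real.sqrt_sq_eq_abs]
      have hfc : Real.sqrt (t^2+c^2) = 1 := by
        rw [hcdef, Real.sq_sqrt ht2.le]
        simp
      calc ∫ r in Set.Ioi (0:ℝ), r * g₂ t r
          = ∫ r in Set.Ioi (0:ℝ),
              Set.indicator {x : ℝ | t^2 + x^2 < 1}
                (fun r => r * h (t/Real.sqrt (t^2+r^2))) r := by rw [← e1]
        _ = ∫ r in Set.Ioo 0 c, r * h (t/Real.sqrt (t^2+r^2)) := by
              rw [setIntegral_indicator hSmeas, e2]
        _ = ∫ r in (0:ℝ)..c, r * h (t/Real.sqrt (t^2+r^2)) := by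
              rw [intervalIntegral.integral_of_le hc0.le,
                MeasureTheory.integral_Ioc_eq_integral_Ioo]
        _ = ∫ y in (0:ℝ)..c, (y / Real.sqrt (t^2+y^2))
              • ((fun ρ => ρ * h (t/ρ)) ∘ (fun y => Real.sqrt (t^2+y^2))) y := by
              apply intervalIntegral.integral_congr
              intro y _
              have := (hs0 y).ne'
              simp only [Function.comp_apply, smul_eq_mul]
              field_simp
        _ = ∫ ρ in |t|..1, ρ * h (t/ρ) := by rw [hsub, hf0, hfc]
        _ = ∫ ρ in Set.Ioo |t| 1, ρ * h (t/ρ) := by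
              rw [intervalIntegral.integral_of_le htlt.le,
                MeasureTheory.integral_Ioc_eq_integral_Ioo]
        _ = ∫ ρ : ℝ, F₂ (t, ρ) := by
              rw [hRHS, MeasureTheory.integral_indicator measurableSet_Ioo]
    · -- |t| > 1 : both sides vanish
      push_neg at htlt
      have htgt : 1 < |t| := lt_of_le_of_ne htlt (Ne.symm habs)
      have hL : (fun r => r * g₂ t r) = fun _ => (0:ℝ) := by
        funext r
        rw [hg₂]
        dsimp only
        rw [Set.indicator_of_notMem, mul_zero]
        simp only [Set.mem_setOf_eq, not_lt]
        nlinarith [sq_nonneg r, sq_abs t]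
      have hR : (fun ρ => F₂ (t, ρ)) = fun _ => (0:ℝ) := by
        rw [hRHS, Set.Ioo_eq_empty (by intro hlt; linarith), Set.indicator_empty]
      rw [hL, hR]
      simp
  -- step 5 : integrability of F₂ for Fubini
  have hSmeas2 : MeasurableSet {q : ℝ × ℝ | |q.1| < q.2 ∧ q.2 < 1} := by
    refine (IsOpen.inter ?_ ?_).measurableSet
    · exact isOpen_lt (continuous_abs.comp continuous_fst) continuous_snd
    · exact isOpen_lt continuous_snd continuous_const
  have hF₂int : Integrable F₂ (volume : Measure (ℝ × ℝ)) := by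
    rw [hF₂]
    refine (MeasureTheory.Measure.integrableOn_of_bounded (M := C) ?_ ?_ ?_).integrable_indicator
      hSmeas2
    · refine ne_of_lt (lt_of_le_of_lt (measure_mono ?_)
        (?_ : volume (Set.Ioo (-1:ℝ) 1 ×ˢ Set.Ioo (0:ℝ) 1) < ⊤))
      · rintro ⟨t, ρ⟩ ⟨h1, h2⟩
        simp only [Set.mem_prod, Set.mem_Ioo]
        have h0 : 0 ≤ |t| := abs_nonneg t
        exact ⟨abs_lt.mp (lt_trans h1 h2), lt_of_le_of_lt h0 h1, h2⟩
      · rw [MeasureTheory.Measure.volume_eq_prod, MeasureTheory.Measure.prod_prod]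
        exact ENNReal.mul_lt_top (by simp [Real.volume_Ioo]) (by simp [Real.volume_Ioo])
    · exact (measurable_snd.mul
        (hc.measurable.comp (measurable_fst.div measurable_snd))).aestronglyMeasurable
    · rw [MeasureTheory.ae_restrict_iff' hSmeas2]
      filter_upwards with q hq
      obtain ⟨h1, h2⟩ := hq
      have hq2 : 0 < q.2 := lt_of_le_of_lt (abs_nonneg q.1) h1
      have harg : |q.1 / q.2| ≤ 1 := by
        rw [abs_div, abs_of_pos hq2, div_le_one hq2]
        exact (le_of_lt h1)
      have hb2 : |q.2| ≤ 1 := by rw [abs_of_pos hq2]; exact h2.le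
      calc ‖q.2 * h (q.1/q.2)‖ = |q.2| * ‖h (q.1/q.2)‖ := by
            rw [norm_mul]; rfl
        _ ≤ 1 * C := by
            refine mul_le_mul hb2 (hC _ (abs_le.mp harg)) (norm_nonneg _) zero_le_one
        _ = C := one_mul C
  -- step 6 : value of the inner t-integral
  have step6 : ∀ ρ : ℝ, (∫ t : ℝ, F₂ (t, ρ))
      = Set.indicator (Set.Ioo (0:ℝ) 1) (fun ρ => ρ^2 * I) ρ := by
    intro ρ
    by_cases hρ : ρ ∈ Set.Ioo (0:ℝ) 1
    · rw [Set.indicator_of_mem hρ]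
      obtain ⟨hρ0, hρ1⟩ := hρ
      have e3 : (fun t => F₂ (t, ρ)) = Set.indicator (Set.Ioo (-ρ) ρ) (fun t => ρ * h (t/ρ)) := by
        funext t
        rw [hF₂]
        dsimp only
        rw [Set.indicator_apply, Set.indicator_apply]
        refine if_congr ?_ rfl rfl
        simp only [Set.mem_setOf_eq, Set.mem_Ioo, abs_lt]
        constructor
        · rintro ⟨h1, -⟩; exact h1
        · rintro h1; exact ⟨h1, hρ1⟩
      rw [e3, MeasureTheory.integral_indicator measurableSet_Ioo, ← MeasureTheory.integral_Ioc_eq_integral_Ioo,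
        ← intervalIntegral.integral_of_le (by linarith : -ρ ≤ ρ),
        intervalIntegral.integral_const_mul]
      have hcomp := intervalIntegral.inv_mul_integral_comp_div (a := -ρ) (b := ρ) (c := ρ) (f := h)
      rw [neg_div, div_self hρ0.ne'] at hcomp
      have : (∫ x in -ρ..ρ, h (x / ρ)) = ρ * I := by
        rw [hI, ← hcomp]
        field_simp
      rw [this]
      ring
    · rw [Set.indicator_of_notMem hρ]
      have e4 : (fun t => F₂ (t, ρ)) = fun _ => (0:ℝ) := by
        funext t
        rw [hF₂]
        dsimp only
        have hnm : (t,ρ) ∉ {q : ℝ × ℝ | |q.1| < q.2 ∧ q.2 < 1} := by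
          rintro ⟨hlt, hlt1⟩
          exact hρ ⟨lt_of_le_of_lt (abs_nonneg t) hlt, hlt1⟩
        rw [Set.indicator_of_notMem hnm]
      rw [e4]
      simp
  -- step 7 : final 1-d integral
  have step7 : (∫ ρ : ℝ, Set.indicator (Set.Ioo (0:ℝ) 1) (fun ρ => ρ^2 * I) ρ) = I/3 := by
    rw [MeasureTheory.integral_indicator measurableSet_Ioo, ← MeasureTheory.integral_Ioc_eq_integral_Ioo,
      ← intervalIntegral.integral_of_le zero_le_one, intervalIntegral.integral_mul_const,
      integral_pow]
    norm_num
    ring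
  -- assemble
  rw [step1, step2]
  have e5 : (fun t => ∫ y : EuclideanSpace ℝ (Fin 2), g₂ t ‖y‖)
      = fun t => 2 * (c₂ * ∫ r in Set.Ioi (0:ℝ), r * g₂ t r) := funext step3
  rw [e5, MeasureTheory.integral_const_mul, MeasureTheory.integral_const_mul]
  have e6 : (∫ t : ℝ, ∫ r in Set.Ioi (0:ℝ), r * g₂ t r) = ∫ t : ℝ, ∫ ρ : ℝ, F₂ (t, ρ) :=
    integral_congr_ae step4
  have e7 : (∫ t : ℝ, ∫ ρ : ℝ, F₂ (t, ρ)) = ∫ ρ : ℝ, ∫ t : ℝ, F₂ (t, ρ) := by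
    apply MeasureTheory.integral_integral_swap
    have : Function.uncurry (fun t ρ => F₂ (t, ρ)) = F₂ := by
      funext q
      simp [Function.uncurry]
    rw [this, ← MeasureTheory.Measure.volume_eq_prod]
    exact hF₂int
  have e8 : (∫ ρ : ℝ, ∫ t : ℝ, F₂ (t, ρ)) = I/3 := by
    rw [← step7]
    exact integral_congr_ae (Filter.Eventually.of_forall step6)
  rw [e6, e7, e8]
  ring
noncomputable def Gfun (b s : ℝ) : ℝ := ((1+b^2) - (3-b^2)*s^2) / ((1-s^2)^2)

lemma ftc_lemma {b : ℝ} (hb0 : 0 < b) (hb1 : b < 1) :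
    ∫ u in (-1:ℝ)..1, Gfun b (b*u) = 2*((1/b) * Real.log ((1+b)/(1-b)) - 1) := by
  set A : ℝ → ℝ := fun u => (1/b)*(Real.log (1+b*u) - Real.log (1-b*u)) - (1-b^2)*u/(1-b^2*u^2)
    with hA
  have hb2 : b^2 < 1 := by nlinarith
  have hden : ∀ u : ℝ, u ∈ Set.uIcc (-1:ℝ) 1 → 1 - b^2*u^2 ≠ 0 := by
    intro u hu
    rw [Set.uIcc_of_le (by norm_num)] at hu
    have : u^2 ≤ 1 := by
      rcases hu with ⟨h1, h2⟩; nlinarith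
    nlinarith
  have hderiv : ∀ u ∈ Set.uIcc (-1:ℝ) 1, HasDerivAt A (Gfun b (b*u)) u := by
    intro u hu
    rw [Set.uIcc_of_le (by norm_num)] at hu
    obtain ⟨hu1, hu2⟩ := hu
    have hp : (0:ℝ) < 1 + b*u := by nlinarith
    have hm : (0:ℝ) < 1 - b*u := by nlinarith
    have hq : 1 - b^2*u^2 ≠ 0 := by nlinarith
    have h1 : HasDerivAt (fun u : ℝ => 1 + b*u) b u := by
      simpa using ((hasDerivAt_id u).const_mul b).const_add 1
    have h1' : HasDerivAt (fun u : ℝ => 1 - b*u) (-b) u := by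
      simpa using ((hasDerivAt_id u).const_mul b).const_sub 1
    have h2 : HasDerivAt (fun u : ℝ => Real.log (1+b*u)) ((1+b*u)⁻¹ * b) u :=
      HasDerivAt.comp (h₂ := Real.log) u (Real.hasDerivAt_log hp.ne') h1
    have h2' : HasDerivAt (fun u : ℝ => Real.log (1-b*u)) ((1-b*u)⁻¹ * (-b)) u :=
      HasDerivAt.comp (h₂ := Real.log) u (Real.hasDerivAt_log hm.ne') h1'
    have h3 : HasDerivAt (fun u : ℝ => (1-b^2)*u) (1-b^2) u := by
      simpa using (hasDerivAt_id u).const_mul (1-b^2)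
    have h4 : HasDerivAt (fun u : ℝ => 1-b^2*u^2) (-(b^2*(2*u))) u := by
      have := ((hasDerivAt_pow 2 u).const_mul (b^2)).const_sub 1
      simpa using this
    have h5 := (h3.div h4 hq)
    have h6 := ((h2.sub h2').const_mul (1/b)).sub h5
    refine h6.congr_deriv ?_
    symm
    rw [Gfun]
    have hbne : b ≠ 0 := hb0.ne'
    have hrw : (1-(b*u)^2)^2 = (1-b^2*u^2)^2 := by ring
    rw [hrw]
    have e1 : (1+b*u)⁻¹ * b - (1-b*u)⁻¹*(-b) = 2*b / (1-b^2*u^2) := by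
      rw [show (1:ℝ)-b^2*u^2 = (1+b*u)*(1-b*u) from by ring]
      field_simp
      ring
    rw [e1]
    field_simp
    ring
  have hcont : IntervalIntegrable (fun u => Gfun b (b*u)) volume (-1) 1 := by
    apply ContinuousOn.intervalIntegrable
    apply ContinuousOn.div
    · fun_prop
    · fun_prop
    · intro u hu
      have := hden u hu
      have h : 1 - (b*u)^2 ≠ 0 := by rw [mul_pow] at *; simpa [mul_comm] using this
      intro hc
      exact h (by
        have := sq_eq_zero_iff.mp hc
        linarith [this])
  rw [intervalIntegral.integral_eq_sub_of_hasDerivAt hderiv hcont]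
  have hL : Real.log ((1+b)/(1-b)) = Real.log (1+b) - Real.log (1-b) :=
    Real.log_div (by linarith) (by linarith)
  rw [hA]
  simp only
  rw [hL]
  have h1 : 1 - b^2*(1:ℝ)^2 = 1 - b^2 := by ring
  have h2 : 1 - b^2*(-1:ℝ)^2 = 1 - b^2 := by ring
  have hne : 1 - b^2 ≠ 0 := by nlinarith
  field_simp
  ring

variable {n : ℕ} [NeZero n]
local notation "E" => EuclideanSpace ℝ (Fin n)
lemma fact_lemma
    (W : E → ℝ≥0∞) (hW : AEMeasurable W volume)
    (H : Metric.sphere (0:E) 1 → ℝ≥0∞) (hH : Measurable H) (hHfin : ∀ θ, H θ ≠ ∞)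
    (w : Set.Ioi (0:ℝ) → ℝ≥0∞)
    (hfac : ∀ (θ : Metric.sphere (0:E) 1) (r : Set.Ioi (0:ℝ)), W (r.1 • θ.1) = H θ * w r) :
    ∫⁻ x, W x = (∫⁻ θ, H θ ∂(volume : Measure E).toSphere)
      * ∫⁻ r, w r ∂(MeasureTheory.Measure.volumeIoiPow (Module.finrank ℝ E - 1)) := by
  set σ := (volume : Measure E).toSphere with hσ
  set ν := MeasureTheory.Measure.volumeIoiPow (Module.finrank ℝ E - 1) with hν
  have hqmp : Measure.QuasiMeasurePreserving (Subtype.val : ({(0:E)}ᶜ : Set E) → E)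
      (volume.comap (Subtype.val : ({(0:E)}ᶜ : Set E) → E)) volume := by
    refine ⟨measurable_subtype_coe, ?_⟩
    rw [map_comap_subtype_coe (measurableSet_singleton (0:E)).compl]
    exact Measure.restrict_le_self.absolutelyContinuous
  have hmp := (volume : Measure E).measurePreserving_homeomorphUnitSphereProd
  have h1 : AEMeasurable (fun x : ({(0:E)}ᶜ : Set E) => W x.1) (volume.comap (Subtype.val : ({(0:E)}ᶜ : Set E) → E)) :=
    hW.comp_quasiMeasurePreserving hqmp
  have hsymm : MeasurePreserving (homeomorphUnitSphereProd E).symm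
      (σ.prod ν) (volume.comap (Subtype.val : ({(0:E)}ᶜ : Set E) → E)) :=
    hmp.symm (homeomorphUnitSphereProd E).toMeasurableEquiv
  have h2 : AEMeasurable (fun p : Metric.sphere (0:E) 1 × Set.Ioi (0:ℝ) => H p.1 * w p.2)
      (σ.prod ν) := by
    have h3 : AEMeasurable ((fun x : ({(0:E)}ᶜ : Set E) => W x.1) ∘
        (homeomorphUnitSphereProd E).symm) (σ.prod ν) :=
      h1.comp_quasiMeasurePreserving hsymm.quasiMeasurePreserving
    refine h3.congr (Filter.Eventually.of_forall fun p => ?_)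
    show W _ = _
    rw [homeomorphUnitSphereProd_symm_apply_coe, hfac p.1 p.2]
  calc ∫⁻ x, W x = ∫⁻ x in {(0:E)}ᶜ, W x := by
        rw [restrict_compl_singleton]
    _ = ∫⁻ x : ({(0:E)}ᶜ : Set E), W x.1 ∂(volume.comap Subtype.val) :=
        (lintegral_subtype_comap (measurableSet_singleton 0).compl _).symm
    _ = ∫⁻ p : Metric.sphere (0:E) 1 × Set.Ioi (0:ℝ), H p.1 * w p.2 ∂(σ.prod ν) := by
        rw [← hmp.lintegral_comp_emb (Homeomorph.measurableEmbedding _)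
          (fun p => H p.1 * w p.2)]
        refine lintegral_congr fun x => ?_
        rw [← hfac ((homeomorphUnitSphereProd E) x).1 ((homeomorphUnitSphereProd E) x).2]
        congr 1
        have := congrArg Subtype.val ((homeomorphUnitSphereProd E).symm_apply_apply x)
        rw [homeomorphUnitSphereProd_symm_apply_coe] at this
        exact this.symm
    _ = ∫⁻ θ, H θ * ∫⁻ r, w r ∂ν ∂σ := by
        rw [lintegral_prod _ h2]
        exact lintegral_congr fun θ => lintegral_const_mul' _ _ (hHfin θ)
    _ = (∫⁻ θ, H θ ∂σ) * ∫⁻ r, w r ∂ν := lintegral_mul_const _ hH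

end Helpers
set_option maxHeartbeats 2000000 in
/-- The field energy of the charge soliton at velocity `v`, `0 < |v| < 1`, equals
`m_e [ |v|⁻¹ log((1+|v|)/(1-|v|)) - 1 ]` where `m_e` is the electrostatic self-energy. -/
theorem soliton_field_energy_formula
    (ρhat : EuclideanSpace ℝ (Fin 3) → ℝ)
    (hrad : ∃ f : ℝ → ℝ, ∀ k, ρhat k = f ‖k‖)
    (m_e : ℝ)
    (hme : m_e = (1/2) * ∫ k : EuclideanSpace ℝ (Fin 3), (ρhat k)^2 / ‖k‖^2)
    (hint2 : Integrable fun k : EuclideanSpace ℝ (Fin 3) => (ρhat k)^2 / ‖k‖^2)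
    (v : EuclideanSpace ℝ (Fin 3)) (hv0 : 0 < ‖v‖) (hv1 : ‖v‖ < 1)
    (hint : Integrable fun k : EuclideanSpace ℝ (Fin 3) =>
      (ρhat k)^2 * ((‖k‖^2 - ⟪k, v⟫^2)^2)⁻¹
        * ((1 + ‖v‖^2) * ‖k‖^2 - (3 - ‖v‖^2) * ⟪v, k⟫^2)) :
    (1/2) * (∫ k : EuclideanSpace ℝ (Fin 3),
        (ρhat k)^2 * ((‖k‖^2 - ⟪k, v⟫^2)^2)⁻¹
          * ((1 + ‖v‖^2) * ‖k‖^2 - (3 - ‖v‖^2) * ⟪v, k⟫^2))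
      = m_e * ((1 / ‖v‖) * Real.log ((1 + ‖v‖) / (1 - ‖v‖)) - 1) := by
  classical
  set b : ℝ := ‖v‖ with hb
  have hb0 : (0:ℝ) < b := hv0
  have hb1 : b < 1 := hv1
  have hbne : b ≠ 0 := ne_of_gt hb0
  have hb2 : b^2 < 1 := by nlinarith
  obtain ⟨f, hf⟩ := hrad
  set W1r : EuclideanSpace ℝ (Fin 3) → ℝ := fun k =>
    (ρhat k)^2 * ((‖k‖^2 - ⟪k, v⟫^2)^2)⁻¹
      * ((1 + b^2) * ‖k‖^2 - (3 - b^2) * ⟪v, k⟫^2) with hW1r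
  set W3r : EuclideanSpace ℝ (Fin 3) → ℝ := fun k => (ρhat k)^2 / ‖k‖^2 with hW3r
  -- basic positivity facts about `Gfun`
  have hGnonneg : ∀ s : ℝ, |s| ≤ b → 0 ≤ Gfun b s := by
    intro s hs
    rw [Gfun]
    have hs2 : s^2 ≤ b^2 := by nlinarith [sq_abs s, abs_nonneg s]
    apply div_nonneg
    · nlinarith [sq_nonneg (1 - b^2)]
    · positivity
  have hsb : ∀ k : EuclideanSpace ℝ (Fin 3), |⟪v, k⟫ / ‖k‖| ≤ b := by
    intro k
    rcases eq_or_ne k 0 with rfl | hk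
    · simp [hb0.le]
    · have hnk : (0:ℝ) < ‖k‖ := norm_pos_iff.mpr hk
      rw [abs_div, abs_norm, div_le_iff₀ hnk]
      have hcs := abs_real_inner_le_norm v k
      rw [← hb] at hcs
      exact hcs
  -- pointwise product form of the integrand
  have hpoint : ∀ k : EuclideanSpace ℝ (Fin 3), k ≠ 0 →
      W1r k = W3r k * Gfun b (⟪v, k⟫ / ‖k‖) := by
    intro k hk
    have hnk : (0:ℝ) < ‖k‖ := norm_pos_iff.mpr hk
    set s : ℝ := ⟪v, k⟫ / ‖k‖ with hs
    have hvk : ⟪v, k⟫ = s * ‖k‖ := by rw [hs]; field_simp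
    have hkv : ⟪k, v⟫ = s * ‖k‖ := by rw [real_inner_comm]; exact hvk
    have hs2 : s^2 ≤ b^2 := by nlinarith [sq_abs s, abs_nonneg s, hsb k]
    have hs1 : (1:ℝ) - s^2 ≠ 0 := by nlinarith
    rw [hW1r, hW3r, Gfun]
    dsimp only
    rw [hkv, hvk]
    have hden : ‖k‖^2 - (s * ‖k‖)^2 = ‖k‖^2 * (1 - s^2) := by ring
    rw [hden, mul_pow]
    field_simp
  have hW1nonneg : ∀ k, 0 ≤ W1r k := by
    intro k
    rcases eq_or_ne k 0 with rfl | hk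
    · simp [hW1r]
    · rw [hpoint k hk]
      exact mul_nonneg (div_nonneg (sq_nonneg _) (sq_nonneg _)) (hGnonneg _ (hsb k))
  have hW3nonneg : ∀ k, 0 ≤ W3r k := fun k => div_nonneg (sq_nonneg _) (sq_nonneg _)
  -- ENNReal set-up
  set ν := MeasureTheory.Measure.volumeIoiPow
    (Module.finrank ℝ (EuclideanSpace ℝ (Fin 3)) - 1) with hν
  set σm := (volume : Measure (EuclideanSpace ℝ (Fin 3))).toSphere with hσm
  set w1 : Set.Ioi (0:ℝ) → ℝ≥0∞ := fun r => ENNReal.ofReal ((f r.1)^2 / r.1^2) with hw1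
  set w2 : Set.Ioi (0:ℝ) → ℝ≥0∞ := fun r => if r.1 < 1 then 1 else 0 with hw2
  set H1 : Metric.sphere (0 : EuclideanSpace ℝ (Fin 3)) 1 → ℝ≥0∞ :=
    fun θ => ENNReal.ofReal (Gfun b ⟪v, (θ : EuclideanSpace ℝ (Fin 3))⟫) with hH1def
  have hGmeas : Measurable (Gfun b) := by
    unfold Gfun
    exact ((measurable_const.sub (measurable_const.mul (measurable_id.pow_const 2))).div
      ((measurable_const.sub (measurable_id.pow_const 2)).pow_const 2))
  have hinner_cont : Continuous fun k : EuclideanSpace ℝ (Fin 3) => ⟪v, k⟫ :=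
    Continuous.inner continuous_const continuous_id
  have hH1 : Measurable H1 :=
    ((hGmeas.comp (hinner_cont.comp continuous_subtype_val).measurable)).ennreal_ofReal
  have hθnorm : ∀ θ : Metric.sphere (0 : EuclideanSpace ℝ (Fin 3)) 1,
      ‖(θ : EuclideanSpace ℝ (Fin 3))‖ = 1 := fun θ => mem_sphere_zero_iff_norm.mp θ.2
  have hrθnorm : ∀ (θ : Metric.sphere (0 : EuclideanSpace ℝ (Fin 3)) 1) (r : Set.Ioi (0:ℝ)),
      ‖(r.1 • (θ : EuclideanSpace ℝ (Fin 3)))‖ = r.1 := by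
    intro θ r
    rw [norm_smul, hθnorm, Real.norm_eq_abs, abs_of_pos r.2, mul_one]
  have hθb : ∀ θ : Metric.sphere (0 : EuclideanSpace ℝ (Fin 3)) 1,
      |⟪v, (θ : EuclideanSpace ℝ (Fin 3))⟫| ≤ b := by
    intro θ
    have := abs_real_inner_le_norm v (θ : EuclideanSpace ℝ (Fin 3))
    rwa [hθnorm, mul_one, ← hb] at this
  have hproj : ∀ (θ : Metric.sphere (0 : EuclideanSpace ℝ (Fin 3)) 1) (r : Set.Ioi (0:ℝ)),
      ⟪v, r.1 • (θ : EuclideanSpace ℝ (Fin 3))⟫ / ‖r.1 • (θ : EuclideanSpace ℝ (Fin 3))‖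
        = ⟪v, (θ : EuclideanSpace ℝ (Fin 3))⟫ := by
    intro θ r
    rw [real_inner_smul_right, hrθnorm]
    exact mul_div_cancel_left₀ _ (ne_of_gt r.2)
  have hrθne : ∀ (θ : Metric.sphere (0 : EuclideanSpace ℝ (Fin 3)) 1) (r : Set.Ioi (0:ℝ)),
      r.1 • (θ : EuclideanSpace ℝ (Fin 3)) ≠ 0 := by
    intro θ r hzz
    have h := hrθnorm θ r
    rw [hzz, norm_zero] at h
    exact (ne_of_gt r.2) h.symm
  -- FACT application 1 : main integrand
  have happ1 : (∫⁻ k, ENNReal.ofReal (W1r k))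
      = (∫⁻ θ, H1 θ ∂σm) * ∫⁻ r, w1 r ∂ν := by
    refine fact_lemma (n := 3) _ ?_ H1 hH1 (fun θ => ENNReal.ofReal_ne_top) w1 ?_
    · exact hint.aestronglyMeasurable.aemeasurable.ennreal_ofReal
    · intro θ r
      have hrfac : W1r (r.1 • (θ : EuclideanSpace ℝ (Fin 3)))
          = Gfun b ⟪v, (θ : EuclideanSpace ℝ (Fin 3))⟫ * ((f r.1)^2 / r.1^2) := by
        rw [hpoint _ (hrθne θ r), hproj θ r, hW3r]
        dsimp only
        rw [hf, hrθnorm]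
        ring
      rw [hrfac, ENNReal.ofReal_mul (hGnonneg _ (hθb θ))]
  -- FACT application 3 : radial integrand
  have happ3 : (∫⁻ k, ENNReal.ofReal (W3r k)) = σm Set.univ * ∫⁻ r, w1 r ∂ν := by
    have hfac3 : ∀ (θ : Metric.sphere (0 : EuclideanSpace ℝ (Fin 3)) 1) (r : Set.Ioi (0:ℝ)),
        (fun k => ENNReal.ofReal (W3r k)) (r.1 • (θ : EuclideanSpace ℝ (Fin 3)))
          = (fun _ : Metric.sphere (0 : EuclideanSpace ℝ (Fin 3)) 1 => (1:ℝ≥0∞)) θ * w1 r := by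
      intro θ r
      rw [one_mul, hw1]
      dsimp only
      rw [hW3r]
      dsimp only
      rw [hf, hrθnorm]
    have := fact_lemma (n := 3) _
      (hint2.aestronglyMeasurable.aemeasurable.ennreal_ofReal)
      _ measurable_const (fun _ => ENNReal.one_ne_top) w1 hfac3
    rw [this, lintegral_one]
  -- FACT application 2 : angular integrand with ball cutoff
  set Bfun : EuclideanSpace ℝ (Fin 3) → ℝ :=
    Set.indicator (Metric.ball 0 1) (fun k => Gfun b (⟪v, k⟫ / ‖k‖)) with hBfun
  have hBmeas : Measurable Bfun :=
    (hGmeas.comp (hinner_cont.measurable.div measurable_norm)).indicator measurableSet_ball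
  have happ2 : (∫⁻ k, ENNReal.ofReal (Bfun k))
      = (∫⁻ θ, H1 θ ∂σm) * ∫⁻ r, w2 r ∂ν := by
    refine fact_lemma (n := 3) _ (hBmeas.ennreal_ofReal.aemeasurable) H1 hH1
      (fun θ => ENNReal.ofReal_ne_top) w2 ?_
    intro θ r
    rw [hBfun, hH1def, hw2]
    dsimp only
    by_cases hr1 : r.1 < 1
    · rw [Set.indicator_of_mem (mem_ball_zero_iff.mpr (by rw [hrθnorm]; exact hr1)),
        hproj θ r, if_pos hr1, mul_one]
    · rw [Set.indicator_of_notMem (by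
        rw [mem_ball_zero_iff, hrθnorm]; exact hr1), if_neg hr1, mul_zero]
      simp
  -- FACT application 4 : ball volume
  have happ4 : volume (Metric.ball (0 : EuclideanSpace ℝ (Fin 3)) 1)
      = σm Set.univ * ∫⁻ r, w2 r ∂ν := by
    have hfac4 : ∀ (θ : Metric.sphere (0 : EuclideanSpace ℝ (Fin 3)) 1) (r : Set.Ioi (0:ℝ)),
        (fun k => Set.indicator (Metric.ball (0 : EuclideanSpace ℝ (Fin 3)) 1)
            (1 : EuclideanSpace ℝ (Fin 3) → ℝ≥0∞) k) (r.1 • (θ : EuclideanSpace ℝ (Fin 3)))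
          = (fun _ : Metric.sphere (0 : EuclideanSpace ℝ (Fin 3)) 1 => (1:ℝ≥0∞)) θ * w2 r := by
      intro θ r
      rw [hw2]
      dsimp only
      by_cases hr1 : r.1 < 1
      · rw [Set.indicator_of_mem (mem_ball_zero_iff.mpr (by rw [hrθnorm]; exact hr1)),
          if_pos hr1, one_mul, Pi.one_apply]
      · rw [Set.indicator_of_notMem (by rw [mem_ball_zero_iff, hrθnorm]; exact hr1),
          if_neg hr1, mul_zero]
    have h5 := fact_lemma (n := 3) _
      ((measurable_one.indicator measurableSet_ball).aemeasurable)
      _ measurable_const (fun _ => ENNReal.one_ne_top) w2 hfac4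
    rw [lintegral_indicator_one measurableSet_ball, lintegral_one] at h5
    exact h5
  -- value of the `w2` integral
  have hw2val : (∫⁻ r, w2 r ∂ν) = ENNReal.ofReal (1/3) := by
    have hset : w2 = Set.indicator (Set.Iio (⟨1, by norm_num⟩ : Set.Ioi (0:ℝ)))
        (1 : Set.Ioi (0:ℝ) → ℝ≥0∞) := by
      funext r
      rw [hw2, Set.indicator_apply]
      dsimp only [Pi.one_apply]
      congr 1
    rw [hset, lintegral_indicator_one measurableSet_Iio, hν,
      MeasureTheory.Measure.volumeIoiPow_apply_Iio]
    norm_num [finrank_euclideanSpace_fin]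
    -- rotation: an orthonormal basis whose first vector is v/‖v‖
  set uvec : EuclideanSpace ℝ (Fin 3) := b⁻¹ • v with huvec
  have hunit : ‖uvec‖ = 1 := by
    rw [huvec, norm_smul, Real.norm_eq_abs, abs_of_pos (inv_pos.mpr hb0), ← hb]
    field_simp
  have horth : Orthonormal ℝ (Set.restrict {(0 : Fin 3)} (fun _ => uvec)) := by
    constructor
    · intro i; exact hunit
    · intro i j hij
      exact absurd (Subtype.ext ((Set.mem_singleton_iff.mp i.2).trans
        (Set.mem_singleton_iff.mp j.2).symm)) hij
  obtain ⟨β, hβ⟩ := horth.exists_orthonormalBasis_extension_of_card_eq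
    (by simp [finrank_euclideanSpace_fin])
  have hβ0 : β 0 = uvec := hβ 0 rfl
  have hTv : ∀ x : EuclideanSpace ℝ (Fin 3), ⟪v, β.repr.symm x⟫ = b * x 0 := by
    intro x
    have hv' : v = b • uvec := by rw [huvec, smul_inv_smul₀ hbne]
    nth_rewrite 1 [hv']
    rw [real_inner_smul_left, ← hβ0, ← OrthonormalBasis.repr_apply_apply,
      LinearIsometryEquiv.apply_symm_apply]
  -- clamped angular profile
  set hfun : ℝ → ℝ := fun x => Gfun b (b * (max (-1) (min 1 x))) with hhfun
  have hclamp : ∀ x : ℝ, |x| ≤ 1 → max (-1 : ℝ) (min 1 x) = x := by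
    intro x hx
    obtain ⟨h1, h2⟩ := abs_le.mp hx
    rw [min_eq_right h2, max_eq_right h1]
  have hclampmem : ∀ x : ℝ, |max (-1 : ℝ) (min 1 x)| ≤ 1 := by
    intro x
    rw [abs_le]
    constructor
    · exact le_max_left _ _
    · exact max_le (by norm_num) (min_le_left _ _)
  have hfuncont : Continuous hfun := by
    have hGcont : ContinuousOn (Gfun b) {s : ℝ | s^2 < 1} := by
      apply ContinuousOn.div (by fun_prop) (by fun_prop)
      intro s hs
      simp only [Set.mem_setOf_eq] at hs
      have h1 : (1:ℝ) - s^2 > 0 := by linarith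
      positivity
    rw [hhfun]
    refine hGcont.comp_continuous
      (continuous_const.mul ((continuous_const.max (continuous_const.min continuous_id)))) ?_
    intro x
    simp only [Set.mem_setOf_eq]
    have hcc : (max (-1:ℝ) (min 1 x))^2 ≤ 1 := by
      nlinarith [sq_abs (max (-1:ℝ) (min 1 x)), hclampmem x,
        abs_nonneg (max (-1:ℝ) (min 1 x))]
    calc (b * max (-1:ℝ) (min 1 x))^2 = b^2 * (max (-1:ℝ) (min 1 x))^2 := by ring
      _ ≤ b^2 * 1 := by nlinarith [sq_nonneg b]
      _ < 1 := by nlinarith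
  -- the rotated integrand
  have hBrot : ∀ x : EuclideanSpace ℝ (Fin 3), Bfun (β.repr.symm x)
      = Set.indicator (Metric.ball 0 1) (fun k => hfun (k 0 / ‖k‖)) x := by
    intro x
    rw [hBfun]
    have hnx : ‖β.repr.symm x‖ = ‖x‖ := β.repr.symm.norm_map x
    by_cases hxb : x ∈ Metric.ball (0 : EuclideanSpace ℝ (Fin 3)) 1
    · rw [Set.indicator_of_mem (by
        rw [mem_ball_zero_iff, hnx]; exact mem_ball_zero_iff.mp hxb),
        Set.indicator_of_mem hxb]
      rw [hTv, hnx, hhfun]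
      dsimp only
      rw [hclamp _ (coord_div_norm_mem x), mul_div_assoc]
    · rw [Set.indicator_of_notMem (by
        rw [mem_ball_zero_iff, hnx]
        exact fun hcc => hxb (mem_ball_zero_iff.mpr hcc)),
        Set.indicator_of_notMem hxb]
  set c₂ : ℝ := (volume (Metric.ball (0 : EuclideanSpace ℝ (Fin 2)) 1)).toReal with hc₂
  set Cp : ℝ := (1/b) * Real.log ((1+b)/(1-b)) - 1 with hCp
  -- value of ∫ Bfun via the Fubini pipeline
  have hBval : (∫ k, Bfun k) = (2/3 * c₂) * (2 * Cp) := by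
    have h1 : (∫ k, Bfun k) = ∫ x, Bfun (β.repr.symm x) :=
      (β.measurePreserving_repr_symm.integral_comp
        (β.repr.symm.toHomeomorph.measurableEmbedding) Bfun).symm
    rw [h1, show (fun x => Bfun (β.repr.symm x))
        = Set.indicator (Metric.ball 0 1) (fun k => hfun (k 0 / ‖k‖)) from funext hBrot,
      pipe_lemma hfuncont]
    have h2 : (∫ x in (-1:ℝ)..1, hfun x) = ∫ x in (-1:ℝ)..1, Gfun b (b*x) := by
      apply intervalIntegral.integral_congr
      intro x hx
      rw [Set.uIcc_of_le (by norm_num)] at hx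
      rw [hhfun]
      dsimp only
      rw [hclamp x (abs_le.mpr ⟨hx.1, hx.2⟩)]
    rw [h2, ftc_lemma hb0 hb1, hCp, hc₂]
  -- ball volume via the pipeline with constant profile
  have hVb : (volume (Metric.ball (0 : EuclideanSpace ℝ (Fin 3)) 1)).toReal
      = (2/3 * c₂) * 2 := by
    have h1 := pipe_lemma (h := fun _ => (1:ℝ)) continuous_const
    rw [intervalIntegral.integral_const] at h1
    simp only [sub_neg_eq_add, smul_eq_mul, mul_one] at h1
    rw [MeasureTheory.integral_indicator_const (1:ℝ) measurableSet_ball] at h1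
    simp only [smul_eq_mul, mul_one] at h1
    rw [← measureReal_def, h1, hc₂]
    norm_num
  have hBC : (∫ k, Bfun k) = Cp * (volume (Metric.ball (0 : EuclideanSpace ℝ (Fin 3)) 1)).toReal := by
    rw [hBval, hVb]; ring
  -- nonnegativity of Cp
  have hCpnonneg : 0 ≤ Cp := by
    have hexp : (1-b) * Real.exp b ≤ 1 := by
      have h1 : 1 - b ≤ Real.exp (-b) := by
        have := Real.add_one_le_exp (-b)
        linarith
      calc (1-b) * Real.exp b ≤ Real.exp (-b) * Real.exp b :=
            mul_le_mul_of_nonneg_right h1 (Real.exp_pos b).le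
        _ = 1 := by rw [← Real.exp_add]; simp
    have hlog : b ≤ Real.log ((1+b)/(1-b)) := by
      rw [Real.le_log_iff_exp_le (div_pos (by linarith) (by linarith) : (0:ℝ) < (1+b)/(1-b))]
      rw [le_div_iff₀ (by linarith : (0:ℝ) < 1-b)]
      calc Real.exp b * (1-b) = (1-b) * Real.exp b := by ring
        _ ≤ 1 := hexp
        _ ≤ 1 + b := by linarith
    have : (1:ℝ) ≤ (1/b) * Real.log ((1+b)/(1-b)) := by
      rw [div_mul_eq_mul_div, one_mul, le_div_iff₀ hb0]
      linarith
    rw [hCp]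
    linarith
  -- nonnegativity and integrability of Bfun
  have hBnonneg : ∀ k, 0 ≤ Bfun k := by
    intro k
    rw [hBfun]
    exact Set.indicator_apply_nonneg (fun _ => hGnonneg _ (hsb k))
  have hBint : Integrable Bfun := by
    have hGbd : ∀ s : ℝ, |s| ≤ b → Gfun b s ≤ 4/((1-b^2)^2) := by
      intro s hs
      have hs2 : s^2 ≤ b^2 := by nlinarith [sq_abs s, abs_nonneg s]
      rw [Gfun]
      have hden : (0:ℝ) < 1 - s^2 := by nlinarith
      have hdenb : (0:ℝ) < 1 - b^2 := by nlinarith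
      apply div_le_div₀ (by norm_num)
      · nlinarith
      · positivity
      · nlinarith
    rw [hBfun]
    refine (MeasureTheory.Measure.integrableOn_of_bounded (M := 4/((1-b^2)^2))
      measure_ball_lt_top.ne
      ((hGmeas.comp (hinner_cont.measurable.div measurable_norm)).aestronglyMeasurable)
      ?_).integrable_indicator measurableSet_ball
    filter_upwards with k
    simp only [Function.comp_apply, Pi.div_apply]
    have : ‖Gfun b (⟪v, k⟫ / ‖k‖)‖ = Gfun b (⟪v, k⟫ / ‖k‖) := by
      rw [Real.norm_eq_abs, abs_of_nonneg (hGnonneg _ (hsb k))]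
    rw [this]
    exact hGbd _ (hsb k)
  -- ENNReal transfer
  have hBenn : ENNReal.ofReal (∫ k, Bfun k) = ∫⁻ k, ENNReal.ofReal (Bfun k) :=
    MeasureTheory.ofReal_integral_eq_lintegral_ofReal hBint
      (Filter.Eventually.of_forall hBnonneg)
  -- the spherical integral of the angular profile
  have hSG : (∫⁻ θ, H1 θ ∂σm) = ENNReal.ofReal Cp * σm Set.univ := by
    have h13 : (ENNReal.ofReal (1/3 : ℝ)) ≠ 0 :=
      (ENNReal.ofReal_pos.mpr (by norm_num)).ne'
    have h13' : (ENNReal.ofReal (1/3 : ℝ)) ≠ ⊤ := ENNReal.ofReal_ne_top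
    refine (ENNReal.mul_left_inj h13 h13').mp ?_
    calc (∫⁻ θ, H1 θ ∂σm) * ENNReal.ofReal (1/3)
        = (∫⁻ θ, H1 θ ∂σm) * ∫⁻ r, w2 r ∂ν := by rw [hw2val]
      _ = ∫⁻ k, ENNReal.ofReal (Bfun k) := happ2.symm
      _ = ENNReal.ofReal (∫ k, Bfun k) := hBenn.symm
      _ = ENNReal.ofReal Cp * ENNReal.ofReal
            ((volume (Metric.ball (0 : EuclideanSpace ℝ (Fin 3)) 1)).toReal) := by
          rw [hBC, ENNReal.ofReal_mul hCpnonneg]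
      _ = ENNReal.ofReal Cp * volume (Metric.ball (0 : EuclideanSpace ℝ (Fin 3)) 1) := by
          rw [ENNReal.ofReal_toReal measure_ball_lt_top.ne]
      _ = ENNReal.ofReal Cp * (σm Set.univ * ∫⁻ r, w2 r ∂ν) := by rw [happ4]
      _ = (ENNReal.ofReal Cp * σm Set.univ) * ENNReal.ofReal (1/3) := by
          rw [hw2val]; ring
  -- main ENNReal identity
  have hmain : (∫⁻ k, ENNReal.ofReal (W1r k))
      = ENNReal.ofReal Cp * ∫⁻ k, ENNReal.ofReal (W3r k) := by
    rw [happ1, hSG, happ3]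
    ring
  -- back to the Bochner integral
  have hW3fin : (∫⁻ k, ENNReal.ofReal (W3r k)) ≠ ⊤ := hint2.lintegral_lt_top.ne
  have hI1 : (∫ k, W1r k) = (∫⁻ k, ENNReal.ofReal (W1r k)).toReal :=
    MeasureTheory.integral_eq_lintegral_of_nonneg_ae
      (Filter.Eventually.of_forall hW1nonneg) hint.aestronglyMeasurable
  have hI3 : (∫ k, W3r k) = (∫⁻ k, ENNReal.ofReal (W3r k)).toReal :=
    MeasureTheory.integral_eq_lintegral_of_nonneg_ae
      (Filter.Eventually.of_forall hW3nonneg) hint2.aestronglyMeasurable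
  have hfinal : (∫ k, W1r k) = Cp * ∫ k, W3r k := by
    rw [hI1, hmain, ENNReal.toReal_mul, ENNReal.toReal_ofReal hCpnonneg, ← hI3]
  rw [hfinal, hme, hCp]
  ring
end

section
/- The soliton energy and momentum satisfy the Hamiltonian relation v · (dP_s/dv) = ∇_v E_s(v) for all v with |v| < 1, equivalently P_s(v) = ∇_v T(v) and E_s(v) = P_s(v)·v - T(v) with T(v) = -m_b γ⁻¹ + m_e (1 - v²) |v|⁻¹ · (1/2) log((1+|v|)/(1-|v|)) (suitably normalized). -/
open scoped RealInnerProductSpace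

lemma aux_sqrt_inv (r : ℝ) (h0 : 0 < r) (h1 : r < 1) :
    HasDerivAt (fun t : ℝ => (Real.sqrt (1 - t^2))⁻¹)
      (r / (Real.sqrt (1 - r^2) * (1 - r^2))) r := by
  have h2 : (0:ℝ) < 1 - r^2 := by nlinarith
  have hs : 0 < Real.sqrt (1 - r^2) := Real.sqrt_pos.mpr h2
  have hsq : Real.sqrt (1 - r^2)^2 = 1 - r^2 := Real.sq_sqrt h2.le
  have ha : HasDerivAt (fun t : ℝ => 1 - t^2) (-(2*r)) r := by
    simpa using (hasDerivAt_pow 2 r).const_sub 1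
  have hb := (ha.sqrt h2.ne')
  have hc := hb.inv hs.ne'
  refine hc.congr_deriv ?_
  symm
  rw [div_eq_div_iff (by positivity) (by positivity)]
  field_simp
  nlinarith [hsq, hs]

lemma aux_log (r : ℝ) (h0 : 0 < r) (h1 : r < 1) :
    HasDerivAt (fun t : ℝ => Real.log ((1+t)/(1-t))) (2/(1-r^2)) r := by
  have hr1 : (0:ℝ) < 1 - r := by linarith
  have hr2 : (0:ℝ) < 1 + r := by linarith
  have h4 : HasDerivAt (fun t : ℝ => 1+t) 1 r := by
    simpa using (hasDerivAt_id r).const_add 1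
  have h5 : HasDerivAt (fun t : ℝ => 1-t) (-1) r := by
    simpa using (hasDerivAt_id r).const_sub 1
  have h6 := h4.div h5 hr1.ne'
  have h7 := h6.log (div_pos hr2 hr1).ne'
  have h2 : (0:ℝ) < 1 - r^2 := by nlinarith
  refine h7.congr_deriv ?_
  simp only [Pi.div_apply]
  field_simp [h2.ne']
  ring

lemma aux_F (m_b m_e r : ℝ) (h0 : 0 < r) (h1 : r < 1) :
    HasDerivAt (fun t : ℝ => m_b * (Real.sqrt (1 - t^2))⁻¹
        + m_e * ((1 / t) * Real.log ((1 + t) / (1 - t)) - 1))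
      (m_b * (r / (Real.sqrt (1 - r^2) * (1 - r^2)))
        + m_e * (-(r^2)⁻¹ * Real.log ((1 + r) / (1 - r)) + 1 / r * (2 / (1 - r^2)))) r := by
  have hinvt : HasDerivAt (fun t : ℝ => 1 / t) (-(r^2)⁻¹) r := by
    simpa [one_div] using (hasDerivAt_inv h0.ne')
  have hmul := hinvt.mul (aux_log r h0 h1)
  exact ((aux_sqrt_inv r h0 h1).const_mul m_b).add ((hmul.sub_const 1).const_mul m_e)

lemma aux_H (m_b m_e r : ℝ) (h0 : 0 < r) (h1 : r < 1) :
    HasDerivAt (fun t : ℝ => m_b * (Real.sqrt (1 - t^2))⁻¹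
        + m_e * ((t^2)⁻¹ * ((1 + t^2) / (2 * t) * Real.log ((1 + t) / (1 - t)) - 1)))
      (m_b * (r / (Real.sqrt (1 - r^2) * (1 - r^2)))
        + m_e * ((-(2*r) / (r^2)^2) * ((1 + r^2) / (2 * r) * Real.log ((1 + r) / (1 - r)) - 1)
          + (r^2)⁻¹ * ((r^2 - 1) / (2 * r^2) * Real.log ((1 + r) / (1 - r))
            + (1 + r^2) / (2 * r) * (2 / (1 - r^2))))) r := by
  have g1 : HasDerivAt (fun t : ℝ => (t^2)⁻¹) (-(2*r) / (r^2)^2) r := by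
    have := (hasDerivAt_pow 2 r).inv (pow_ne_zero 2 h0.ne')
    refine this.congr_deriv ?_
    norm_num
  have g2 : HasDerivAt (fun t : ℝ => (1 + t^2) / (2 * t)) ((r^2 - 1) / (2 * r^2)) r := by
    have hn : HasDerivAt (fun t : ℝ => 1 + t^2) (2*r) r := by
      simpa using (hasDerivAt_pow 2 r).const_add 1
    have hd : HasDerivAt (fun t : ℝ => 2*t) 2 r := by
      simpa using (hasDerivAt_id r).const_mul 2
    have := hn.div hd (by positivity)
    refine this.congr_deriv ?_
    field_simp
    ring
  have g3 := (g2.mul (aux_log r h0 h1)).sub_const 1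
  have g4 := g1.mul g3
  exact ((aux_sqrt_inv r h0 h1).const_mul m_b).add (g4.const_mul m_e)


/-- The Hamiltonian relation `v · (dP_s/dv) = ∇_v E_s(v)` between soliton energy
and momentum: for every direction `w`, the derivative of `u ↦ ⟪v, P_s u⟫` at `v`
in direction `w` agrees with the derivative of `E_s` at `v` in direction `w`. -/
theorem soliton_energy_momentum_hamiltonian_relation
    (m_b m_e : ℝ) (hmb : 0 < m_b) (hme : 0 < m_e)
    (Es : EuclideanSpace ℝ (Fin 3) → ℝ)
    (Ps : EuclideanSpace ℝ (Fin 3) → EuclideanSpace ℝ (Fin 3))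
    (hEs : ∀ u : EuclideanSpace ℝ (Fin 3), u ≠ 0 → ‖u‖ < 1 →
      Es u = m_b * (Real.sqrt (1 - ‖u‖^2))⁻¹
        + m_e * ((1 / ‖u‖) * Real.log ((1 + ‖u‖) / (1 - ‖u‖)) - 1))
    (hPs : ∀ u : EuclideanSpace ℝ (Fin 3), u ≠ 0 → ‖u‖ < 1 →
      Ps u = (m_b * (Real.sqrt (1 - ‖u‖^2))⁻¹
        + m_e * (‖u‖^2)⁻¹ *
          ((1 + ‖u‖^2) / (2 * ‖u‖) * Real.log ((1 + ‖u‖) / (1 - ‖u‖)) - 1)) • u)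
    (v : EuclideanSpace ℝ (Fin 3)) (hv0 : v ≠ 0) (hv1 : ‖v‖ < 1) :
    ∀ w : EuclideanSpace ℝ (Fin 3),
      fderiv ℝ (fun u => ⟪v, Ps u⟫) v w = fderiv ℝ Es v w := by
  intro w
  have hr0 : (0:ℝ) < ‖v‖ := norm_pos_iff.mpr hv0
  have h2 : (0:ℝ) < 1 - ‖v‖^2 := by nlinarith
  have hs : 0 < Real.sqrt (1 - ‖v‖^2) := Real.sqrt_pos.mpr h2
  -- derivative of the norm
  have hnsq : HasFDerivAt (fun u : EuclideanSpace ℝ (Fin 3) => ‖u‖^2)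
      (2 • (innerSL ℝ v)) v := (hasStrictFDerivAt_norm_sq v).hasFDerivAt
  have hnorm : HasFDerivAt (fun u : EuclideanSpace ℝ (Fin 3) => ‖u‖)
      ((‖v‖)⁻¹ • innerSL ℝ v) v := by
    have hsq : (0:ℝ) < ‖v‖^2 := by positivity
    have h := (Real.hasDerivAt_sqrt hsq.ne').comp_hasFDerivAt v hnsq
    have hfun : (Real.sqrt ∘ fun u : EuclideanSpace ℝ (Fin 3) => ‖u‖^2)
        = fun u : EuclideanSpace ℝ (Fin 3) => ‖u‖ := by
      funext u
      simp [Function.comp, Real.sqrt_sq (norm_nonneg u)]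
    rw [hfun] at h
    refine h.congr_fderiv ?_
    rw [Real.sqrt_sq (norm_nonneg v)]
    ext y
    simp [smul_smul]
    ring
  -- eventually-facts
  have hev : ∀ᶠ u in nhds v, u ≠ 0 ∧ ‖u‖ < 1 := by
    filter_upwards [eventually_ne_nhds hv0,
      (continuous_norm.tendsto v).eventually_lt_const hv1] with u h1 h2
    exact ⟨h1, h2⟩
  -- Es side
  have hE : HasFDerivAt Es
      ((m_b * (‖v‖ / (Real.sqrt (1 - ‖v‖^2) * (1 - ‖v‖^2)))
        + m_e * (-(‖v‖^2)⁻¹ * Real.log ((1 + ‖v‖) / (1 - ‖v‖)) + 1 / ‖v‖ * (2 / (1 - ‖v‖^2))))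
        • ((‖v‖)⁻¹ • innerSL ℝ v)) v := by
    have h := (aux_F m_b m_e ‖v‖ hr0 hv1).comp_hasFDerivAt v hnorm
    apply h.congr_of_eventuallyEq
    filter_upwards [hev] with u hu
    rw [hEs u hu.1 hu.2]
    rfl
  -- Ps side
  have hinner : HasFDerivAt (fun u : EuclideanSpace ℝ (Fin 3) => ⟪v, u⟫)
      (innerSL ℝ v) v := (innerSL ℝ v).hasFDerivAt
  have hHn := (aux_H m_b m_e ‖v‖ hr0 hv1).comp_hasFDerivAt v hnorm
  have hP' := hHn.mul hinner
  have hP : HasFDerivAt (fun u => ⟪v, Ps u⟫)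
      ((m_b * (Real.sqrt (1 - ‖v‖^2))⁻¹
        + m_e * ((‖v‖^2)⁻¹ * ((1 + ‖v‖^2) / (2 * ‖v‖) * Real.log ((1 + ‖v‖) / (1 - ‖v‖)) - 1)))
        • (innerSL ℝ v)
      + ⟪v, v⟫ • ((m_b * (‖v‖ / (Real.sqrt (1 - ‖v‖^2) * (1 - ‖v‖^2)))
        + m_e * ((-(2*‖v‖) / (‖v‖^2)^2) * ((1 + ‖v‖^2) / (2 * ‖v‖) * Real.log ((1 + ‖v‖) / (1 - ‖v‖)) - 1)
          + (‖v‖^2)⁻¹ * ((‖v‖^2 - 1) / (2 * ‖v‖^2) * Real.log ((1 + ‖v‖) / (1 - ‖v‖))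
            + (1 + ‖v‖^2) / (2 * ‖v‖) * (2 / (1 - ‖v‖^2)))))
        • ((‖v‖)⁻¹ • innerSL ℝ v))) v := by
    apply hP'.congr_of_eventuallyEq
    filter_upwards [hev] with u hu
    rw [hPs u hu.1 hu.2, real_inner_smul_right]
    simp only [Pi.mul_apply, Function.comp_apply]
    ring
  rw [hP.fderiv, hE.fderiv]
  simp only [ContinuousLinearMap.add_apply, ContinuousLinearMap.smul_apply, innerSL_apply_apply,
    smul_eq_mul, real_inner_self_eq_norm_sq]
  have key : (m_b * (Real.sqrt (1 - ‖v‖^2))⁻¹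
        + m_e * ((‖v‖^2)⁻¹ * ((1 + ‖v‖^2) / (2 * ‖v‖) * Real.log ((1 + ‖v‖) / (1 - ‖v‖)) - 1)))
      + ‖v‖^2 * ((m_b * (‖v‖ / (Real.sqrt (1 - ‖v‖^2) * (1 - ‖v‖^2)))
        + m_e * ((-(2*‖v‖) / (‖v‖^2)^2) * ((1 + ‖v‖^2) / (2 * ‖v‖) * Real.log ((1 + ‖v‖) / (1 - ‖v‖)) - 1)
          + (‖v‖^2)⁻¹ * ((‖v‖^2 - 1) / (2 * ‖v‖^2) * Real.log ((1 + ‖v‖) / (1 - ‖v‖))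
            + (1 + ‖v‖^2) / (2 * ‖v‖) * (2 / (1 - ‖v‖^2))))) * (‖v‖)⁻¹)
      = (m_b * (‖v‖ / (Real.sqrt (1 - ‖v‖^2) * (1 - ‖v‖^2)))
        + m_e * (-(‖v‖^2)⁻¹ * Real.log ((1 + ‖v‖) / (1 - ‖v‖)) + 1 / ‖v‖ * (2 / (1 - ‖v‖^2)))) * (‖v‖)⁻¹ := by
    field_simp
    ring
  linear_combination ⟪v, w⟫ * key
end

section
/- The map v ↦ P_s(v) from the open unit ball {v ∈ ℝ³ : |v| < 1} to ℝ³ is a bijection, i.e., for every P ∈ ℝ³ there exists a unique v with |v| < 1 such that P_s(v) = P. -/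
section SolitonAux
open Real Set

noncomputable def Lf (u : ℝ) : ℝ := Real.log (1+u) - Real.log (1-u)

lemma Lf_hasDerivAt {u : ℝ} (h1 : -1 < u) (h2 : u < 1) :
    HasDerivAt Lf (2/(1-u^2)) u := by
  have hp : (0:ℝ) < 1 + u := by linarith
  have hm : (0:ℝ) < 1 - u := by linarith
  have h12 : (1:ℝ) - u^2 ≠ 0 := by nlinarith
  have d1 : HasDerivAt (fun u : ℝ => Real.log (1+u)) (1+u)⁻¹ u := by
    have : HasDerivAt (fun u : ℝ => 1+u) 1 u := (hasDerivAt_id u).const_add 1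
    simpa [Function.comp_def] using (Real.hasDerivAt_log hp.ne').comp u this
  have d2 : HasDerivAt (fun u : ℝ => Real.log (1-u)) (-(1-u)⁻¹) u := by
    have : HasDerivAt (fun u : ℝ => 1-u) (-1) u := by
      simpa using (hasDerivAt_id u).const_sub (1:ℝ)
    simpa [Function.comp_def] using (Real.hasDerivAt_log hm.ne').comp u this
  have : HasDerivAt Lf _ u := d1.sub d2
  convert this using 1
  field_simp
  ring

lemma Lf_ge {u : ℝ} (h0 : 0 ≤ u) (h1 : u < 1) : 2*u ≤ Lf u := by
  have key : MonotoneOn (fun u => Lf u - 2*u) (Ico 0 1) := by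
    apply monotoneOn_of_deriv_nonneg (convex_Ico 0 1)
    · apply ContinuousOn.sub ?_ (by fun_prop)
      intro x hx
      exact (Lf_hasDerivAt (by linarith [hx.1]) hx.2).continuousAt.continuousWithinAt
    · intro x hx
      rw [interior_Ico] at hx
      exact ((Lf_hasDerivAt (by linarith [hx.1]) hx.2).sub
        (by simpa using (hasDerivAt_id x).const_mul (2:ℝ))).differentiableAt.differentiableWithinAt
    · intro x hx
      rw [interior_Ico] at hx
      have hd : HasDerivAt (fun u => Lf u - 2*u) (2/(1-x^2) - 2) x :=
        (Lf_hasDerivAt (by linarith [hx.1]) hx.2).sub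
          (by simpa using (hasDerivAt_id x).const_mul (2:ℝ))
      rw [hd.deriv]
      have h12 : (0:ℝ) < 1 - x^2 := by nlinarith [hx.1, hx.2]
      rw [sub_nonneg, le_div_iff₀ h12]
      nlinarith [hx.1, hx.2]
  have := key (show (0:ℝ) ∈ Ico (0:ℝ) 1 by constructor <;> norm_num)
    (show u ∈ Ico (0:ℝ) 1 from ⟨h0, h1⟩) h0
  simp only [Lf] at this ⊢
  simp at this
  linarith

lemma Lf_lt {u : ℝ} (h0 : 0 < u) (h1 : u < 1) : Lf u < 2*u/(1-u^2) := by
  have key : StrictMonoOn (fun u => 2*u/(1-u^2) - Lf u) (Ico 0 1) := by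
    apply strictMonoOn_of_deriv_pos (convex_Ico 0 1)
    · apply ContinuousOn.sub
      · apply ContinuousOn.div (by fun_prop) (by fun_prop)
        intro x hx
        have : (0:ℝ) < 1 - x^2 := by nlinarith [hx.1, hx.2]
        linarith
      · intro x hx
        exact (Lf_hasDerivAt (by linarith [hx.1]) hx.2).continuousAt.continuousWithinAt
    · intro x hx
      rw [interior_Ico] at hx
      have h12 : (0:ℝ) < 1 - x^2 := by nlinarith [hx.1, hx.2]
      have hd : HasDerivAt (fun u : ℝ => 2*u/(1-u^2) - Lf u)
          ((2*(1-x^2) - 2*x*(-2*x))/(1-x^2)^2 - 2/(1-x^2)) x := by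
        apply HasDerivAt.sub ?_ (Lf_hasDerivAt (by linarith [hx.1]) hx.2)
        exact HasDerivAt.div (by simpa using (hasDerivAt_id x).const_mul (2:ℝ))
          (by simpa using (hasDerivAt_pow 2 x).const_sub (1:ℝ)) h12.ne'
      rw [hd.deriv]
      rw [div_sub_div _ _ (by positivity) h12.ne', lt_div_iff₀ (by positivity)]
      nlinarith [mul_pos (mul_pos hx.1 hx.1) h12]
  have := key (show (0:ℝ) ∈ Ico (0:ℝ) 1 by constructor <;> norm_num)
    (show u ∈ Ico (0:ℝ) 1 from ⟨h0.le, h1⟩) h0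
  simp only [Lf] at this ⊢
  simp at this
  linarith

noncomputable def Hf (m_b m_e u : ℝ) : ℝ :=
  m_b * (u * (Real.sqrt (1-u^2))⁻¹) + m_e * ((1+u^2)/(2*u^2) * Lf u - 1/u)

lemma Hf_hasDerivAt (m_b m_e : ℝ) {u : ℝ} (h0 : 0 < u) (h1 : u < 1) :
    HasDerivAt (Hf m_b m_e)
      (m_b * ((Real.sqrt (1-u^2))⁻¹)^3 + m_e * ((2*u/(1-u^2) - Lf u)/u^3)) u := by
  have h12 : (0:ℝ) < 1 - u^2 := by nlinarith
  have hs : (0:ℝ) < Real.sqrt (1-u^2) := Real.sqrt_pos.mpr h12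
  have hs2 : Real.sqrt (1-u^2)^2 = 1-u^2 := Real.sq_sqrt h12.le
  have dinner : HasDerivAt (fun u : ℝ => 1-u^2) (-2*u) u := by
    simpa using (hasDerivAt_pow 2 u).const_sub (1:ℝ)
  have dsqrt : HasDerivAt (fun u : ℝ => Real.sqrt (1-u^2))
      (-2*u / (2 * Real.sqrt (1-u^2))) u := by
    simpa [mul_comm, div_eq_mul_inv, Function.comp_def] using
      (Real.hasDerivAt_sqrt h12.ne').comp u dinner
  have t1 : HasDerivAt (fun u : ℝ => m_b * (u * (Real.sqrt (1-u^2))⁻¹))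
      (m_b * (1 * (Real.sqrt (1-u^2))⁻¹ +
        u * (-(-2*u / (2 * Real.sqrt (1-u^2))) / (Real.sqrt (1-u^2))^2))) u :=
    ((hasDerivAt_id u).mul (dsqrt.inv hs.ne')).const_mul m_b
  have dA : HasDerivAt (fun u : ℝ => (1+u^2)/(2*u^2))
      ((2*u*(2*u^2) - (1+u^2)*(2*(2*u)))/(2*u^2)^2) u := by
    exact HasDerivAt.div (by simpa using (hasDerivAt_pow 2 u).const_add 1)
      ((hasDerivAt_pow 2 u).const_mul 2 |>.congr_deriv (by ring))
      (by positivity)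
  have dLf := Lf_hasDerivAt (by linarith) h1
  have dinvu : HasDerivAt (fun u : ℝ => 1/u) (-1/u^2) u := by
    simpa [one_div] using (hasDerivAt_inv h0.ne').congr_deriv (show -(u^2)⁻¹ = -1/u^2 by ring)
  have t2 : HasDerivAt (fun u : ℝ => m_e * ((1+u^2)/(2*u^2) * Lf u - 1/u))
      (m_e * (((2*u*(2*u^2) - (1+u^2)*(2*(2*u)))/(2*u^2)^2) * Lf u
        + (1+u^2)/(2*u^2) * (2/(1-u^2)) - (-1/u^2))) u :=
    ((dA.mul dLf).sub dinvu).const_mul m_e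
  have : HasDerivAt (Hf m_b m_e) _ u := t1.add t2
  convert this using 1
  set s := Real.sqrt (1-u^2) with hsdef
  rw [← hs2]
  have hsne : s ≠ 0 := hs.ne'
  have hune : u ≠ 0 := h0.ne'
  field_simp
  linear_combination (-m_b*u^3 - m_e*u*s) * hs2

lemma Hf_strictMono (m_b m_e : ℝ) (hmb : 0 ≤ m_b) (hme : 0 < m_e) :
    StrictMonoOn (Hf m_b m_e) (Ioo 0 1) := by
  apply strictMonoOn_of_deriv_pos (convex_Ioo 0 1)
  · intro x hx
    exact (Hf_hasDerivAt m_b m_e hx.1 hx.2).continuousAt.continuousWithinAt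
  · intro x hx
    rw [interior_Ioo] at hx
    rw [(Hf_hasDerivAt m_b m_e hx.1 hx.2).deriv]
    have h1 : 0 ≤ m_b * ((Real.sqrt (1-x^2))⁻¹)^3 := mul_nonneg hmb (by positivity)
    have h2 : 0 < m_e * ((2*x/(1-x^2) - Lf x)/x^3) := by
      apply mul_pos hme
      exact div_pos (by linarith [Lf_lt hx.1 hx.2]) (pow_pos hx.1 3)
    linarith

lemma Hf_ub (m_b m_e : ℝ) (hmb : 0 ≤ m_b) (hme : 0 < m_e) {u : ℝ}
    (h0 : 0 < u) (h12 : u ≤ 1/2) : Hf m_b m_e u ≤ (2*m_b + 3*m_e)*u := by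
  have h1 : u < 1 := by linarith
  have hu2 : (0:ℝ) < 1 - u^2 := by nlinarith
  have hL0 : 0 ≤ Lf u := le_trans (by linarith) (Lf_ge h0.le h1)
  have hA : Lf u * (1-u^2) ≤ 2*u := by
    have := Lf_lt h0 h1
    rw [lt_div_iff₀ hu2] at this
    linarith
  have hB : (3:ℝ)/4 ≤ 1 - u^2 := by nlinarith
  have hs : (1:ℝ)/2 ≤ Real.sqrt (1-u^2) := by
    rw [show (1:ℝ)/2 = Real.sqrt (1/4) by
      rw [show (1/4:ℝ) = (1/2)^2 by norm_num, Real.sqrt_sq (by norm_num)]]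
    exact Real.sqrt_le_sqrt (by linarith)
  have hsp : (0:ℝ) < Real.sqrt (1-u^2) := by linarith
  have t1 : u * (Real.sqrt (1-u^2))⁻¹ ≤ 2*u := by
    rw [← div_eq_mul_inv, div_le_iff₀ hsp]
    nlinarith
  have t2 : (1+u^2)/(2*u^2) * Lf u - 1/u ≤ 3*u := by
    rw [div_mul_eq_mul_div, div_sub_div _ _ (by positivity) h0.ne', div_le_iff₀ (by positivity)]
    have hL3 : Lf u ≤ 3*u := by
      nlinarith [mul_le_mul_of_nonneg_left hB hL0]
    nlinarith [mul_le_mul_of_nonneg_left hA h0.le,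
      mul_le_mul_of_nonneg_left hL3 (pow_pos h0 3).le]
  unfold Hf
  nlinarith [mul_le_mul_of_nonneg_left t1 hmb, mul_le_mul_of_nonneg_left t2 hme.le]

lemma Hf_lb (m_b m_e : ℝ) (hmb : 0 ≤ m_b) (hme : 0 < m_e) {u : ℝ}
    (h0 : 0 < u) (h1 : u < 1) : m_e * (Lf u - 1) ≤ Hf m_b m_e u := by
  have hu2 : (0:ℝ) < 1 - u^2 := by nlinarith
  have hL : 2*u ≤ Lf u := Lf_ge h0.le h1
  have hL0 : 0 ≤ Lf u := le_trans (by linarith) hL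
  have t1 : 0 ≤ m_b * (u * (Real.sqrt (1-u^2))⁻¹) := by positivity
  have t2 : Lf u - 1 ≤ (1+u^2)/(2*u^2) * Lf u - 1/u := by
    rw [div_mul_eq_mul_div]
    rw [div_sub_div _ _ (by positivity) h0.ne']
    rw [le_div_iff₀ (by positivity)]
    nlinarith [mul_le_mul_of_nonneg_left hL (mul_nonneg h0.le hu2.le), sq_nonneg u,
      mul_pos (mul_pos h0 h0) (show (0:ℝ) < 1 - u by linarith)]
  unfold Hf
  nlinarith [mul_le_mul_of_nonneg_left t2 hme.le]

end SolitonAux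

open Real Set



/-- The soliton velocity–momentum map `v ↦ P_s(v)` is a bijection from the open unit
ball of ℝ³ onto ℝ³. -/
theorem soliton_momentum_bijective
    (m_b m_e : ℝ) (hmb : 0 ≤ m_b) (hme : 0 < m_e)
    (g : ℝ → ℝ)
    (hg : ∀ u : ℝ, 0 < u → u < 1 →
      g u = m_b * (Real.sqrt (1 - u^2))⁻¹
        + m_e * (u^2)⁻¹ * ((1 + u^2) / (2 * u) * Real.log ((1 + u) / (1 - u)) - 1))
    (hg0 : g 0 = m_b + (4/3) * m_e)
    (Ps : EuclideanSpace ℝ (Fin 3) → EuclideanSpace ℝ (Fin 3))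
    (hPs : ∀ v, Ps v = g ‖v‖ • v) :
    ∀ P : EuclideanSpace ℝ (Fin 3), ∃! v : EuclideanSpace ℝ (Fin 3),
      ‖v‖ < 1 ∧ Ps v = P := by
  -- transfer: u * g u = Hf m_b m_e u on (0,1)
  have hgH : ∀ u : ℝ, 0 < u → u < 1 → u * g u = Hf m_b m_e u := by
    intro u h0 h1
    have hp : (0:ℝ) < 1 + u := by linarith
    have hm : (0:ℝ) < 1 - u := by linarith
    rw [hg u h0 h1, Hf, Lf, ← Real.log_div hp.ne' hm.ne']
    field_simp
  -- positivity of g on [0,1)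
  have gpos : ∀ u : ℝ, 0 ≤ u → u < 1 → 0 < g u := by
    intro u h0 h1
    rcases eq_or_lt_of_le h0 with h|h
    · rw [← h, hg0]; linarith
    · rw [hg u h h1]
      have hp : (0:ℝ) < 1 + u := by linarith
      have hm : (0:ℝ) < 1 - u := by linarith
      have hL : 2*u ≤ Real.log ((1+u)/(1-u)) := by
        rw [Real.log_div hp.ne' hm.ne']; exact Lf_ge h0 h1
      have h2u : (0:ℝ) < (1+u^2)/(2*u) := by positivity
      have hB : (0:ℝ) < (1 + u^2)/(2*u) * Real.log ((1+u)/(1-u)) - 1 := by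
        have : (1+u^2)/(2*u) * (2*u) ≤ (1+u^2)/(2*u) * Real.log ((1+u)/(1-u)) :=
          mul_le_mul_of_nonneg_left hL h2u.le
        rw [div_mul_cancel₀] at this
        · nlinarith
        · positivity
      have : 0 ≤ m_b * (Real.sqrt (1-u^2))⁻¹ := mul_nonneg hmb (by positivity)
      nlinarith [mul_pos (mul_pos hme (show (0:ℝ) < (u^2)⁻¹ by positivity)) hB]
  intro P
  by_cases hP : P = 0
  · refine ⟨0, ⟨by simp, by simp [hPs, hP]⟩, ?_⟩
    rintro w ⟨hw1, hw2⟩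
    rw [hPs] at hw2
    have hgw : g ‖w‖ ≠ 0 := (gpos ‖w‖ (norm_nonneg w) hw1).ne'
    rw [hP] at hw2
    rcases smul_eq_zero.mp hw2 with h|h
    · exact absurd h hgw
    · exact h
  · have hM : 0 < ‖P‖ := norm_pos_iff.mpr hP
    set M := ‖P‖ with hMdef
    set K := 2*m_b + 3*m_e with hKdef
    have hK : 0 < K := by positivity
    set u₀ : ℝ := min (1/2) (M/(2*K)) with hu₀def
    have hu₀pos : 0 < u₀ := lt_min (by norm_num) (by positivity)
    have hu₀half : u₀ ≤ 1/2 := min_le_left _ _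
    have hHu₀ : Hf m_b m_e u₀ < M := by
      have h1 := Hf_ub m_b m_e hmb hme hu₀pos hu₀half
      have h2 : u₀ ≤ M/(2*K) := min_le_right _ _
      have : K * u₀ ≤ K * (M/(2*K)) := mul_le_mul_of_nonneg_left h2 hK.le
      rw [mul_div_assoc'] at this
      have h3 : K * M / (2*K) = M/2 := by field_simp
      rw [h3] at this
      calc Hf m_b m_e u₀ ≤ K*u₀ := by rw [hKdef]; exact h1
        _ ≤ M/2 := this
        _ < M := by linarith
    set C : ℝ := max 2 (M/m_e + 1) with hCdef
    have hC2 : 2 ≤ C := le_max_left _ _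
    have hCM : M/m_e + 1 ≤ C := le_max_right _ _
    set E : ℝ := Real.exp C with hEdef
    have hE : 3 < E := by
      calc (3:ℝ) = 2 + 1 := by norm_num
        _ < Real.exp 2 := Real.add_one_lt_exp (by norm_num)
        _ ≤ E := Real.exp_le_exp.mpr hC2
    set u₁ : ℝ := (E - 1)/(E + 1) with hu₁def
    have hEp : (0:ℝ) < E + 1 := by linarith
    have hu₁pos : 0 < u₁ := div_pos (by linarith) hEp
    have hu₁lt : u₁ < 1 := by rw [div_lt_one hEp]; linarith
    have hu₁half : 1/2 < u₁ := by rw [lt_div_iff₀ hEp]; linarith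
    have hLfu₁ : Lf u₁ = C := by
      have e1 : 1 + u₁ = 2*E/(E+1) := by rw [hu₁def]; field_simp; ring
      have e2 : 1 - u₁ = 2/(E+1) := by rw [hu₁def]; field_simp; ring
      rw [Lf, e1, e2]
      rw [show 2*E/(E+1) = E * (2/(E+1)) by ring]
      rw [Real.log_mul (by positivity) (by positivity)]
      simp [hEdef]
    have hHu₁ : M ≤ Hf m_b m_e u₁ := by
      have := Hf_lb m_b m_e hmb hme hu₁pos hu₁lt
      rw [hLfu₁] at this
      have h4 : M ≤ m_e * (C - 1) := by
        have : M/m_e ≤ C - 1 := by linarith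
        calc M = m_e * (M/m_e) := by field_simp
          _ ≤ m_e * (C-1) := mul_le_mul_of_nonneg_left this hme.le
      linarith
    have hu₀₁ : u₀ ≤ u₁ := by linarith
    have hcont : ContinuousOn (Hf m_b m_e) (Icc u₀ u₁) := by
      intro x hx
      exact (Hf_hasDerivAt m_b m_e (lt_of_lt_of_le hu₀pos hx.1)
        (lt_of_le_of_lt hx.2 hu₁lt)).continuousAt.continuousWithinAt
    have hIVT := intermediate_value_Icc hu₀₁ hcont
    have hMem : M ∈ Icc (Hf m_b m_e u₀) (Hf m_b m_e u₁) := ⟨hHu₀.le, hHu₁⟩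
    obtain ⟨t, ht, hHt⟩ := hIVT hMem
    have htpos : 0 < t := lt_of_lt_of_le hu₀pos ht.1
    have htlt : t < 1 := lt_of_le_of_lt ht.2 hu₁lt
    have hgt : 0 < g t := gpos t htpos.le htlt
    have htg : t * g t = M := by rw [hgH t htpos htlt, hHt]
    refine ⟨(t/M) • P, ⟨?_, ?_⟩, ?_⟩
    · rw [norm_smul, Real.norm_eq_abs, abs_of_pos (by positivity)]
      rw [div_mul_cancel₀ _ hM.ne']
      exact htlt
    · rw [hPs]
      rw [norm_smul, Real.norm_eq_abs, abs_of_pos (by positivity), div_mul_cancel₀ _ hM.ne']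
      rw [smul_smul]
      rw [show g t * (t/M) = (t * g t)/M by ring, htg, div_self hM.ne', one_smul]
    · rintro w ⟨hw1, hw2⟩
      rw [hPs] at hw2
      have hwn : ‖w‖ ≠ 0 := by
        intro h
        rw [norm_eq_zero] at h
        rw [h, smul_zero] at hw2
        exact hP hw2.symm
      have hw0 : 0 < ‖w‖ := lt_of_le_of_ne (norm_nonneg w) (Ne.symm hwn)
      have hgw : 0 < g ‖w‖ := gpos ‖w‖ hw0.le hw1
      have hnorm : ‖w‖ * g ‖w‖ = M := by
        have : ‖g ‖w‖ • w‖ = M := by rw [hw2]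
        rw [norm_smul, Real.norm_eq_abs, abs_of_pos hgw] at this
        linarith [this]
      have hHw : Hf m_b m_e ‖w‖ = Hf m_b m_e t := by
        rw [← hgH ‖w‖ hw0 hw1, ← hgH t htpos htlt, hnorm, htg]
      have hwt : ‖w‖ = t :=
        (Hf_strictMono m_b m_e hmb hme).injOn ⟨hw0, hw1⟩ ⟨htpos, htlt⟩ hHw
      -- now g ‖w‖ • w = P = g t • ((t/M) • P)... both satisfy g t • x = P
      have hgteq : g ‖w‖ = g t := by rw [hwt]
      have h5 : g t • w = P := by rw [← hgteq]; exact hw2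
      have h6 : g t • ((t/M) • P) = P := by
        rw [smul_smul, show g t * (t/M) = (t * g t)/M by ring, htg, div_self hM.ne', one_smul]
      have := h5.trans h6.symm
      exact smul_right_injective _ hgt.ne' this
end

section
/- Instability from negative bare mass: consider the one-dimensional conservation law -m_b c² γ(v_t) + eφ(q_t) + F(t) = -m_b c² γ(v₀) + eφ(q₀) + F(0) with m_b > 0, where the field energy satisfies F(t) ≥ F(0) for all t. If φ is nondecreasing along the motion (q̇_t ≥ 0 wherever defined) then v_t² ≥ 1 - [γ(v₀) + (e/m_b c²)(φ(q_t) - φ(q₀))]⁻², and if additionally φ(q) → ∞ as q → ∞ then q̇_t → c and q_t → ∞ as t → ∞. -/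
open Filter
open scoped Topology

/-- Instability of the Abraham model with negative bare mass: energy conservation
`-m_b γ(v_t) + eφ(q_t) + F(t) = const` with a field energy satisfying `F(t) ≥ F(0)`
forces `v_t² ≥ 1 - [γ(v₀) + (e/m_b)(φ(q_t) - φ(q₀))]⁻²`; if moreover `φ → ∞` at
infinity then the particle runs away: `v_t → 1` (the speed of light) and
`q_t → ∞`. (Units with `c = 1`.) -/
theorem negative_bare_mass_runaway
    (m_b e : ℝ) (hm : 0 < m_b) (he : 0 < e)
    (φ : ℝ → ℝ) (hφmono : Monotone φ)
    (q v F : ℝ → ℝ)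
    (hq : ∀ t, HasDerivAt q (v t) t)
    (hv1 : ∀ t, |v t| < 1)
    (hv0 : 0 < v 0)
    (hvpos : ∀ t, 0 ≤ t → 0 ≤ v t)
    (hF : ∀ t, 0 ≤ t → F 0 ≤ F t)
    (hcons : ∀ t, 0 ≤ t →
      -(m_b * (Real.sqrt (1 - v t ^ 2))⁻¹) + e * φ (q t) + F t
        = -(m_b * (Real.sqrt (1 - v 0 ^ 2))⁻¹) + e * φ (q 0) + F 0) :
    (∀ t, 0 ≤ t →
      1 - (((Real.sqrt (1 - v 0 ^ 2))⁻¹ + (e / m_b) * (φ (q t) - φ (q 0))) ^ 2)⁻¹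
        ≤ v t ^ 2)
    ∧ (Tendsto φ atTop atTop →
        Tendsto v atTop (𝓝 1) ∧ Tendsto q atTop atTop) := by
  -- basic facts about γ
  set g : ℝ → ℝ := fun t => (Real.sqrt (1 - v t ^ 2))⁻¹ with hg
  have hsub : ∀ t, 0 < 1 - v t ^ 2 := by
    intro t
    have := hv1 t
    nlinarith [abs_nonneg (v t), sq_abs (v t), abs_nonneg (v t)]
  have hgpos : ∀ t, 0 < g t := fun t =>
    inv_pos.2 (Real.sqrt_pos.2 (hsub t))
  have hgsq : ∀ t, (g t ^ 2)⁻¹ = 1 - v t ^ 2 := by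
    intro t
    rw [hg]
    simp only
    rw [inv_pow, inv_inv, Real.sq_sqrt (hsub t).le]
  have hg1 : ∀ t, 1 ≤ g t := by
    intro t
    rw [hg]
    simp only
    have h1 : Real.sqrt (1 - v t ^ 2) ≤ 1 := by
      have := Real.sqrt_le_sqrt (show 1 - v t ^ 2 ≤ 1 by nlinarith [sq_nonneg (v t)])
      rwa [Real.sqrt_one] at this
    calc (1:ℝ) = 1⁻¹ := by norm_num
      _ ≤ (Real.sqrt (1 - v t ^ 2))⁻¹ :=
          inv_anti₀ (Real.sqrt_pos.2 (hsub t)) h1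
  -- q monotone on [0,∞)
  have hqmono : MonotoneOn q (Set.Ici (0:ℝ)) := by
    apply monotoneOn_of_hasDerivWithinAt_nonneg (convex_Ici 0)
      (fun x _ => (hq x).continuousAt.continuousWithinAt)
      (f' := v) (fun x hx => (hq x).hasDerivWithinAt)
    intro x hx
    rw [interior_Ici] at hx
    exact hvpos x (le_of_lt hx)
  have hqge : ∀ t, 0 ≤ t → q 0 ≤ q t := fun t ht =>
    hqmono (Set.self_mem_Ici) ht ht
  -- A t ≤ g t
  have hA : ∀ t, 0 ≤ t → g 0 + (e / m_b) * (φ (q t) - φ (q 0)) ≤ g t := by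
    intro t ht
    have h := hcons t ht
    have h2 := hF t ht
    have hgd : ∀ s, g s = (Real.sqrt (1 - v s ^ 2))⁻¹ := fun _ => rfl
    rw [← hgd t, ← hgd 0] at h
    have key : m_b * (g 0 + e / m_b * (φ (q t) - φ (q 0))) ≤ m_b * g t := by
      have expand : m_b * (g 0 + e / m_b * (φ (q t) - φ (q 0)))
          = m_b * g 0 + e * (φ (q t) - φ (q 0)) := by
        field_simp
      rw [expand]; linarith
    exact le_of_mul_le_mul_left key hm
  have hApos : ∀ t, 0 ≤ t → 0 < g 0 + (e / m_b) * (φ (q t) - φ (q 0)) := by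
    intro t ht
    have := hφmono (hqge t ht)
    have : 0 ≤ (e / m_b) * (φ (q t) - φ (q 0)) :=
      mul_nonneg (le_of_lt (div_pos he hm)) (by linarith)
    linarith [hgpos 0]
  -- first part
  have part1 : ∀ t, 0 ≤ t →
      1 - (((Real.sqrt (1 - v 0 ^ 2))⁻¹ + (e / m_b) * (φ (q t) - φ (q 0))) ^ 2)⁻¹
        ≤ v t ^ 2 := by
    intro t ht
    set A := g 0 + (e / m_b) * (φ (q t) - φ (q 0)) with hAdef
    have hA1 : A ≤ g t := hA t ht
    have hA2 : 0 < A := hApos t ht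
    have hsq : A ^ 2 ≤ g t ^ 2 := by nlinarith
    have : (g t ^ 2)⁻¹ ≤ (A ^ 2)⁻¹ :=
      inv_anti₀ (by positivity) hsq
    rw [hgsq t] at this
    have : 1 - (A ^ 2)⁻¹ ≤ v t ^ 2 := by linarith
    exact this
  refine ⟨part1, fun hφtop => ?_⟩
  -- v t ≥ v 0 for t ≥ 0
  have hvge : ∀ t, 0 ≤ t → v 0 ≤ v t := by
    intro t ht
    have hA1 : g 0 ≤ g t := le_trans (by
      have := hφmono (hqge t ht)
      have : 0 ≤ (e / m_b) * (φ (q t) - φ (q 0)) :=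
        mul_nonneg (le_of_lt (div_pos he hm)) (by linarith)
      linarith) (hA t ht)
    have hsq : g 0 ^ 2 ≤ g t ^ 2 := by nlinarith [hgpos 0]
    have hinv : (g t ^ 2)⁻¹ ≤ (g 0 ^ 2)⁻¹ :=
      inv_anti₀ (pow_pos (hgpos 0) 2) hsq
    rw [hgsq t, hgsq 0] at hinv
    have hv2 : v 0 ^ 2 ≤ v t ^ 2 := by linarith
    calc v 0 = Real.sqrt (v 0 ^ 2) := (Real.sqrt_sq hv0.le).symm
      _ ≤ Real.sqrt (v t ^ 2) := Real.sqrt_le_sqrt hv2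
      _ = v t := Real.sqrt_sq (hvpos t ht)
  -- q t ≥ q 0 + v 0 * t
  have hqlin : ∀ t, 0 ≤ t → q 0 + v 0 * t ≤ q t := by
    intro t ht
    have hmono : MonotoneOn (fun s => q s - v 0 * s) (Set.Ici (0:ℝ)) := by
      have hd : ∀ x : ℝ, HasDerivAt (fun s => q s - v 0 * s) (v x - v 0) x := by
        intro x
        exact ((hq x).sub ((hasDerivAt_id x).const_mul (v 0))).congr_deriv (by ring)
      apply monotoneOn_of_hasDerivWithinAt_nonneg (convex_Ici 0)
        (f' := fun s => v s - v 0)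
      · exact fun x _ => (hd x).continuousAt.continuousWithinAt
      · exact fun x _ => (hd x).hasDerivWithinAt
      · intro x hx
        rw [interior_Ici] at hx
        have := hvge x (le_of_lt hx)
        linarith
    have := hmono (Set.self_mem_Ici) (Set.mem_Ici.2 ht) ht
    simp only [mul_zero, sub_zero] at this
    linarith
  have hqtop : Tendsto q atTop atTop := by
    apply tendsto_atTop_mono' _ _ (tendsto_atTop_add_const_left atTop (q 0)
      (tendsto_id.const_mul_atTop hv0))
    filter_upwards [eventually_ge_atTop (0:ℝ)] with t ht
    exact hqlin t ht
  refine ⟨?_, hqtop⟩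
  -- A → ∞
  have hAtop : Tendsto (fun t => g 0 + (e / m_b) * (φ (q t) - φ (q 0))) atTop atTop := by
    apply tendsto_atTop_add_const_left
    apply Tendsto.const_mul_atTop (div_pos he hm)
    apply tendsto_atTop_add_const_right
    exact hφtop.comp hqtop
  have hAinv : Tendsto (fun t => ((g 0 + (e / m_b) * (φ (q t) - φ (q 0))) ^ 2)⁻¹)
      atTop (𝓝 0) := by
    exact Tendsto.inv_tendsto_atTop ((tendsto_pow_atTop two_ne_zero).comp hAtop)
  have hv2lim : Tendsto (fun t => v t ^ 2) atTop (𝓝 1) := by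
    apply tendsto_of_tendsto_of_tendsto_of_le_of_le'
      (g := fun t => 1 - ((g 0 + (e / m_b) * (φ (q t) - φ (q 0))) ^ 2)⁻¹)
      (h := fun _ => (1:ℝ))
    · simpa using (tendsto_const_nhds (x := (1:ℝ))).sub hAinv
    · exact tendsto_const_nhds
    · filter_upwards [eventually_ge_atTop (0:ℝ)] with t ht
      exact part1 t ht
    · filter_upwards with t
      nlinarith [hsub t]
  have : Tendsto (fun t => Real.sqrt (v t ^ 2)) atTop (𝓝 1) := by
    have := hv2lim.sqrt
    rwa [Real.sqrt_one] at this
  apply this.congr'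
  filter_upwards [eventually_ge_atTop (0:ℝ)] with t ht
  exact Real.sqrt_sq (hvpos t ht)
end
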